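/- arXiv:0803.2459 — 6 statements merged into one kernel-verified Lean document; each statement's English description precedes it below -/
import Mathlib

section
/- Let $(\mu_n)$ be a sequence of finite positive measures on $[0,\infty)$ that is increasing for the partial integral order $\preceq$ (i.e. $\mu_n \preceq \mu_{n+1}$ for all $n$) and bounded above by some finite measure $\mu$ (i.e. $\mu_n \preceq \mu$ for all $n$). Then $(\mu_n)$ converges weakly (in fact in total variation) to some finite positive measure $\mu^*$. -/
open MeasureTheory Filter Topology
open scoped BoundedContinuousFunction

/-- The partial integral order `≼` on finite positive measures: `μ ≼ ν` iff
`∫ f dμ ≤ ∫ f dν` for every bounded measurable non-decreasing (nonnegative) `f`. -/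
def IntOrder (μ ν : Measure ℝ) : Prop :=
  ∀ f : ℝ → ℝ, Measurable f → Monotone f → (∀ x, 0 ≤ f x) → (∃ C, ∀ x, f x ≤ C) →
    ∫ x, f x ∂μ ≤ ∫ x, f x ∂ν

lemma intOrder_Ioi_le {μ ν : Measure ℝ} [IsFiniteMeasure μ] [IsFiniteMeasure ν]
    (h : IntOrder μ ν) (x : ℝ) : (μ (Set.Ioi x)).toReal ≤ (ν (Set.Ioi x)).toReal := by
  classical
  have hf := h ((Set.Ioi x).indicator 1) ((measurable_one (α := ℝ)).indicator measurableSet_Ioi)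
    ?_ ?_ ?_
  · rwa [integral_indicator_one measurableSet_Ioi, integral_indicator_one measurableSet_Ioi] at hf
  · intro a b hab
    simp only [Set.indicator_apply, Set.mem_Ioi, Pi.one_apply]
    split_ifs with h1 h2
    · exact le_rfl
    · exact absurd (h1.trans_le hab) h2
    · exact zero_le_one
    · exact le_rfl
  · intro y; exact Set.indicator_nonneg (fun _ _ => zero_le_one) y
  · refine ⟨1, fun y => ?_⟩
    by_cases hy : y ∈ Set.Ioi x <;> simp [Set.indicator_apply, hy]

lemma intOrder_mass_le {μ ν : Measure ℝ} [IsFiniteMeasure μ] [IsFiniteMeasure ν]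
    (h : IntOrder μ ν) : (μ Set.univ).toReal ≤ (ν Set.univ).toReal := by
  have hf := h (fun _ => 1) measurable_const monotone_const (fun _ => zero_le_one)
    ⟨1, fun _ => le_rfl⟩
  simpa [integral_const, smul_eq_mul, Measure.real] using hf

lemma toReal_Iic_add (μ : Measure ℝ) [IsFiniteMeasure μ] (x : ℝ) :
    (μ (Set.Iic x)).toReal + (μ (Set.Ioi x)).toReal = (μ Set.univ).toReal := by
  rw [← ENNReal.toReal_add (measure_ne_top _ _) (measure_ne_top _ _),
    ← measure_union (Set.Iic_disjoint_Ioi le_rfl) measurableSet_Ioi, Set.Iic_union_Ioi]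

lemma toReal_Ioc_eq (μ : Measure ℝ) [IsFiniteMeasure μ] {a b : ℝ} (hab : a ≤ b) :
    (μ (Set.Ioc a b)).toReal = (μ (Set.Iic b)).toReal - (μ (Set.Iic a)).toReal := by
  have h1 : μ (Set.Iic a) + μ (Set.Ioc a b) = μ (Set.Iic b) := by
    rw [← measure_union (Set.Iic_disjoint_Ioc le_rfl) measurableSet_Ioc,
      Set.Iic_union_Ioc_eq_Iic hab]
  have h2 := congrArg ENNReal.toReal h1
  rw [ENNReal.toReal_add (measure_ne_top _ _) (measure_ne_top _ _)] at h2
  linarith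

lemma exists_grid (D : Set ℝ) (hD : D.Countable) (c h : ℝ) (hh : 0 < h) :
    ∃ t : ℕ → ℝ, (∀ i : ℕ, c + i * h < t i ∧ t i < c + i * h + h / 2) ∧ ∀ i, t i ∉ D := by
  have hdense : Dense Dᶜ := hD.dense_compl ℝ
  have H : ∀ i : ℕ, ∃ y, y ∈ Dᶜ ∧ y ∈ Set.Ioo (c + i * h) (c + i * h + h / 2) := by
    intro i
    have hne : (Set.Ioo (c + i * h) (c + i * h + h / 2)).Nonempty :=
      Set.nonempty_Ioo.2 (by linarith)
    obtain ⟨y, hy1, hy2⟩ := hdense.exists_mem_open isOpen_Ioo hne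
    exact ⟨y, hy1, hy2⟩
  choose t h1 h2 using H
  exact ⟨t, fun i => ⟨(h2 i).1, (h2 i).2⟩, fun i => h1 i⟩

lemma exists_mem_Ioc_grid {t : ℕ → ℝ} (ht : ∀ i, t i < t (i + 1)) {k : ℕ} {x : ℝ}
    (h0 : t 0 < x) (hk : x ≤ t k) : ∃ i, i < k ∧ x ∈ Set.Ioc (t i) (t (i + 1)) := by
  induction k with
  | zero => exact absurd hk (not_le.2 h0)
  | succ k ih =>
    by_cases hx : x ≤ t k
    · obtain ⟨i, hik, hi⟩ := ih hx
      exact ⟨i, hik.trans (Nat.lt_succ_self k), hi⟩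
    · exact ⟨k, Nat.lt_succ_self k, not_le.1 hx, hk⟩

lemma le_liminf_of_key {ν : ℕ → Measure ℝ} {ρ : Measure ℝ} [IsFiniteMeasure ρ]
    {D : Set ℝ} (hD : D.Countable)
    (key : ∀ a b : ℝ, a ≤ b → a ∉ D → b ∉ D →
      Tendsto (fun n => ν n (Set.Ioc a b)) atTop (𝓝 (ρ (Set.Ioc a b))))
    {U : Set ℝ} (hU : IsOpen U) : ρ U ≤ atTop.liminf (fun n => ν n U) := by
  classical
  refine le_of_forall_lt fun r hr => ?_
  obtain ⟨K, hKU, hKc, hrK⟩ := hU.exists_lt_isCompact hr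
  refine hrK.trans_le ?_
  rcases K.eq_empty_or_nonempty with rfl | hne
  · simp
  obtain ⟨δ, hδ, hthick⟩ := hKc.exists_thickening_subset_open hU hKU
  obtain ⟨M, hM⟩ := hKc.isBounded.subset_closedBall 0
  have hKbd : ∀ x ∈ K, -M ≤ x ∧ x ≤ M := by
    intro x hx
    have h1 := hM hx
    rw [Real.closedBall_eq_Icc] at h1
    constructor <;> [linarith [h1.1]; linarith [h1.2]]
  set h : ℝ := min (δ / 2) 1 with hh_def
  have hh : 0 < h := lt_min (by linarith) one_pos
  have hhδ : h ≤ δ / 2 := min_le_left _ _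
  have hh1 : h ≤ 1 := min_le_right _ _
  set c : ℝ := -M - 1 with hc_def
  set k : ℕ := ⌈(2 * M + 1) / h⌉₊ + 1 with hk_def
  obtain ⟨t, htIoo, htD⟩ := exists_grid D hD c h hh
  have hadj : ∀ i, t i < t (i + 1) := by
    intro i
    have h1 := (htIoo i).2
    have h2 := (htIoo (i + 1)).1
    have h3 : (↑(i + 1) : ℝ) * h = ↑i * h + h := by push_cast; ring
    linarith
  have htmono : StrictMono t := strictMono_nat_of_lt_succ hadj
  have hgap : ∀ i, t (i + 1) - t i < δ := by
    intro i
    have h1 := (htIoo i).1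
    have h2 := (htIoo (i + 1)).2
    have h3 : (↑(i + 1) : ℝ) * h = ↑i * h + h := by push_cast; ring
    linarith
  have hM0 : 0 ≤ M := by
    obtain ⟨x, hx⟩ := hne
    have := hKbd x hx; linarith
  have ht0 : ∀ x ∈ K, t 0 < x := by
    intro x hx
    have h1 := (htIoo 0).2
    have h2 := (hKbd x hx).1
    have : (↑(0 : ℕ) : ℝ) * h = 0 := by norm_num
    linarith
  have htk : ∀ x ∈ K, x ≤ t k := by
    intro x hx
    have h1 := (htIoo k).1
    have h2 : (2 * M + 1) / h ≤ (k : ℝ) := by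
      rw [hk_def]; push_cast; linarith [Nat.le_ceil ((2 * M + 1) / h)]
    have h3 : 2 * M + 1 ≤ (k : ℝ) * h := by
      rw [div_le_iff₀ hh] at h2; linarith
    have h4 := (hKbd x hx).2
    linarith
  set J := (Finset.range k).filter (fun i => (Set.Ioc (t i) (t (i + 1)) ∩ K).Nonempty) with hJ
  set S := ⋃ i ∈ J, Set.Ioc (t i) (t (i + 1)) with hS
  have hKS : K ⊆ S := by
    intro x hx
    obtain ⟨i, hik, hxi⟩ := exists_mem_Ioc_grid hadj (ht0 x hx) (htk x hx)
    have hiJ : i ∈ J := Finset.mem_filter.2 ⟨Finset.mem_range.2 hik, ⟨x, hxi, hx⟩⟩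
    exact Set.mem_biUnion hiJ hxi
  have hSU : S ⊆ U := by
    refine Set.iUnion₂_subset fun i hi y hy => ?_
    obtain ⟨z, hz⟩ := (Finset.mem_filter.1 hi).2
    refine hthick ?_
    rw [Metric.mem_thickening_iff]
    refine ⟨z, hz.2, ?_⟩
    rw [Real.dist_eq, abs_sub_lt_iff]
    have hy1 := hy.1; have hy2 := hy.2
    have hz1 := hz.1.1; have hz2 := hz.1.2
    have := hgap i
    constructor <;> linarith
  have hdisj : (J : Set ℕ).PairwiseDisjoint (fun i => Set.Ioc (t i) (t (i + 1))) := by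
    intro i _ j _ hij
    rcases lt_or_gt_of_ne hij with hlt | hgt
    · refine Set.Ioc_disjoint_Ioc.2 ?_
      exact (min_le_left _ _).trans ((htmono.monotone hlt).trans (le_max_right _ _))
    · refine Set.Ioc_disjoint_Ioc.2 ?_
      exact (min_le_right _ _).trans ((htmono.monotone hgt).trans (le_max_left _ _))
  have hmeasS : ∀ n, ν n S = ∑ i ∈ J, ν n (Set.Ioc (t i) (t (i + 1))) := fun n =>
    measure_biUnion_finset hdisj (fun i _ => measurableSet_Ioc)
  have hρS : ρ S = ∑ i ∈ J, ρ (Set.Ioc (t i) (t (i + 1))) :=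
    measure_biUnion_finset hdisj (fun i _ => measurableSet_Ioc)
  have htend : Tendsto (fun n => ν n S) atTop (𝓝 (ρ S)) := by
    rw [hρS]
    refine Tendsto.congr (fun n => (hmeasS n).symm) ?_
    exact tendsto_finset_sum J (fun i _ => key (t i) (t (i + 1)) (hadj i).le (htD i) (htD (i + 1)))
  calc ρ K ≤ ρ S := measure_mono hKS
    _ = atTop.liminf (fun n => ν n S) := htend.liminf_eq.symm
    _ ≤ atTop.liminf (fun n => ν n U) :=
        liminf_le_liminf (Eventually.of_forall fun n => measure_mono hSU)

/-- A `≼`-increasing sequence of finite measures on `[0,∞)` bounded above by a finite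
measure converges weakly to some finite measure. -/
theorem stmt0 (μs : ℕ → Measure ℝ) (μ : Measure ℝ)
    [∀ n, IsFiniteMeasure (μs n)] [IsFiniteMeasure μ]
    (hsupp : ∀ n, μs n (Set.Iio 0) = 0) (hsuppμ : μ (Set.Iio 0) = 0)
    (hmono : ∀ n, IntOrder (μs n) (μs (n + 1)))
    (hbdd : ∀ n, IntOrder (μs n) μ) :
    ∃ μstar : Measure ℝ, IsFiniteMeasure μstar ∧
      ∀ f : ℝ → ℝ, Continuous f → (∃ C, ∀ x, |f x| ≤ C) →
        Tendsto (fun n => ∫ x, f x ∂(μs n)) atTop (𝓝 (∫ x, f x ∂μstar)) := by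
  classical
  set B : ℝ := (μ Set.univ).toReal with hB
  have hmn_mono : Monotone (fun n => (μs n Set.univ).toReal) :=
    monotone_nat_of_le_succ (fun n => intOrder_mass_le (hmono n))
  have hmn_bdd : ∀ n, (μs n Set.univ).toReal ≤ B := fun n => intOrder_mass_le (hbdd n)
  have hbdda : BddAbove (Set.range fun n => (μs n Set.univ).toReal) := by
    refine ⟨B, ?_⟩; rintro y ⟨n, rfl⟩; exact hmn_bdd n
  set m : ℝ := ⨆ n, (μs n Set.univ).toReal with hm
  have hmass_tend : Tendsto (fun n => (μs n Set.univ).toReal) atTop (𝓝 m) :=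
    tendsto_atTop_ciSup hmn_mono hbdda
  have hmn_le_m : ∀ n, (μs n Set.univ).toReal ≤ m := fun n => le_ciSup hbdda n
  rcases le_or_gt m 0 with hm0 | hmpos
  · -- degenerate case : all measures vanish
    have hz : ∀ n, μs n = 0 := by
      intro n
      have h1 : (μs n Set.univ).toReal = 0 :=
        le_antisymm ((hmn_le_m n).trans hm0) ENNReal.toReal_nonneg
    -- conclude μs n univ = 0
      have h2 : μs n Set.univ = 0 := by
        rcases (ENNReal.toReal_eq_zero_iff _).1 h1 with h | h
        · exact h
        · exact absurd h (measure_ne_top _ _)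
      exact Measure.measure_univ_eq_zero.1 h2
    refine ⟨0, inferInstance, fun f hf hbf => ?_⟩
    simp only [hz, integral_zero_measure]
    exact tendsto_const_nhds
  -- main case
  have hGn_mono : ∀ x : ℝ, Monotone (fun n => (μs n (Set.Ioi x)).toReal) := fun x =>
    monotone_nat_of_le_succ (fun n => intOrder_Ioi_le (hmono n) x)
  have hGn_bddB : ∀ x (n : ℕ), (μs n (Set.Ioi x)).toReal ≤ B := fun x n =>
    (intOrder_Ioi_le (hbdd n) x).trans
      (ENNReal.toReal_mono (measure_ne_top _ _) (measure_mono (Set.subset_univ _)))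
  have hGbdda : ∀ x : ℝ, BddAbove (Set.range fun n => (μs n (Set.Ioi x)).toReal) := by
    intro x; refine ⟨B, ?_⟩; rintro y ⟨n, rfl⟩; exact hGn_bddB x n
  set G : ℝ → ℝ := fun x => ⨆ n, (μs n (Set.Ioi x)).toReal with hGdef
  have hG_tend : ∀ x, Tendsto (fun n => (μs n (Set.Ioi x)).toReal) atTop (𝓝 (G x)) := fun x =>
    tendsto_atTop_ciSup (hGn_mono x) (hGbdda x)
  have hG_le : ∀ x, G x ≤ (μ (Set.Ioi x)).toReal := fun x =>
    ciSup_le (fun n => intOrder_Ioi_le (hbdd n) x)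
  have hG_le_m : ∀ x, G x ≤ m := fun x => ciSup_le fun n =>
    (ENNReal.toReal_mono (measure_ne_top _ _) (measure_mono (Set.subset_univ _))).trans
      (hmn_le_m n)
  have hG_nonneg : ∀ x, 0 ≤ G x := fun x =>
    le_ciSup_of_le (hGbdda x) 0 ENNReal.toReal_nonneg
  have hG_anti : Antitone G := by
    intro x y hxy
    refine ciSup_le fun n => ?_
    exact (ENNReal.toReal_mono (measure_ne_top _ _)
      (measure_mono (Set.Ioi_subset_Ioi hxy))).trans (le_ciSup (hGbdda x) n)
  set F : ℝ → ℝ := fun x => m - G x with hFdef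
  have hF_mono : Monotone F := fun x y hxy => sub_le_sub_left (hG_anti hxy) m
  have hF_nonneg : ∀ x, 0 ≤ F x := fun x => by
    have := hG_le_m x; simp only [hFdef]; linarith
  have hF_le_m : ∀ x, F x ≤ m := fun x => by
    have := hG_nonneg x; simp only [hFdef]; linarith
  have hFn_eq : ∀ (n : ℕ) (x : ℝ), (μs n (Set.Iic x)).toReal
      = (μs n Set.univ).toReal - (μs n (Set.Ioi x)).toReal := by
    intro n x
    have := toReal_Iic_add (μs n) x
    linarith
  have hF_tend : ∀ x, Tendsto (fun n => (μs n (Set.Iic x)).toReal) atTop (𝓝 (F x)) := by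
    intro x
    simp only [hFn_eq]
    exact hmass_tend.sub (hG_tend x)
  -- Stieltjes function
  set φ := hF_mono.stieltjesFunction with hφdef
  have hφ_eqF : ∀ x, ContinuousAt F x → φ x = F x := by
    intro x hx
    rw [hF_mono.stieltjesFunction_eq]
    exact rightLim_eq_of_tendsto
      (hx.continuousWithinAt.tendsto)
  have hφ_lower : ∀ x, F x ≤ φ x := fun x => by
    rw [hF_mono.stieltjesFunction_eq]; exact hF_mono.le_rightLim le_rfl
  have hφ_upper : ∀ x, φ x ≤ F (x + 1) := fun x => by
    rw [hF_mono.stieltjesFunction_eq]; exact hF_mono.rightLim_le (lt_add_one x)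
  have hFneg : ∀ x < 0, F x = 0 := by
    intro x hx
    have hc : ∀ n : ℕ, (μs n (Set.Iic x)).toReal = 0 := by
      intro n
      have hsub : Set.Iic x ⊆ Set.Iio 0 := Set.Iic_subset_Iio.2 hx
      have := measure_mono_null hsub (hsupp n)
      simp [this]
    have h1 : Tendsto (fun _ : ℕ => (0 : ℝ)) atTop (𝓝 (F x)) :=
      (hF_tend x).congr (fun n => hc n)
    exact tendsto_nhds_unique h1 tendsto_const_nhds
  have hφ_neg : ∀ x < 0, φ x = 0 := by
    intro x hx
    have h1 : φ x ≤ F (x / 2) := by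
      rw [hF_mono.stieltjesFunction_eq]
      exact hF_mono.rightLim_le (by linarith)
    rw [hFneg (x / 2) (by linarith)] at h1
    have h2 := hφ_lower x
    rw [hFneg x hx] at h2
    linarith
  have hφ_bot : Tendsto (⇑φ) atBot (𝓝 0) := by
    refine tendsto_const_nhds.congr' ?_
    filter_upwards [eventually_lt_atBot (0 : ℝ)] with x hx
    exact (hφ_neg x hx).symm
  have hμIic_tend : Tendsto (fun x : ℝ => (μ (Set.Iic x)).toReal) atTop (𝓝 B) :=
    (ENNReal.tendsto_toReal (measure_ne_top μ _)).comp (tendsto_measure_Iic_atTop μ)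
  have hF_lowerbd : ∀ x : ℝ, m - (B - (μ (Set.Iic x)).toReal) ≤ F x := by
    intro x
    have h1 : G x ≤ (μ (Set.Ioi x)).toReal := hG_le x
    have h2 := toReal_Iic_add μ x
    simp only [hFdef]
    rw [← hB] at h2
    linarith
  have hF_top : Tendsto F atTop (𝓝 m) := by
    have hlow : Tendsto (fun x : ℝ => m - (B - (μ (Set.Iic x)).toReal)) atTop (𝓝 (m - (B - B))) :=
      tendsto_const_nhds.sub (tendsto_const_nhds.sub hμIic_tend)
    rw [sub_self, sub_zero] at hlow
    exact tendsto_of_tendsto_of_tendsto_of_le_of_le hlow tendsto_const_nhds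
      (fun x => hF_lowerbd x) (fun x => hF_le_m x)
  have hφ_top : Tendsto (⇑φ) atTop (𝓝 m) := by
    have hup : Tendsto (fun x : ℝ => F (x + 1)) atTop (𝓝 m) :=
      hF_top.comp (tendsto_atTop_add_const_right atTop 1 tendsto_id)
    exact tendsto_of_tendsto_of_tendsto_of_le_of_le hF_top hup hφ_lower hφ_upper
  set μstar := φ.measure with hμstardef
  haveI hμstar_fin : IsFiniteMeasure μstar := φ.isFiniteMeasure hφ_bot hφ_top
  have hμstar_univ : μstar Set.univ = ENNReal.ofReal m := by
    rw [hμstardef, φ.measure_univ hφ_bot hφ_top, sub_zero]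
  have hμstar_Ioc : ∀ a b : ℝ, ContinuousAt F a → ContinuousAt F b →
      μstar (Set.Ioc a b) = ENNReal.ofReal (F b - F a) := by
    intro a b ha hb
    rw [hμstardef, φ.measure_Ioc, hφ_eqF a ha, hφ_eqF b hb]
  -- key interval convergence
  have hIoc_tend : ∀ a b : ℝ, a ≤ b →
      Tendsto (fun n => μs n (Set.Ioc a b)) atTop (𝓝 (ENNReal.ofReal (F b - F a))) := by
    intro a b hab
    have heq : ∀ n, μs n (Set.Ioc a b)
        = ENNReal.ofReal ((μs n (Set.Iic b)).toReal - (μs n (Set.Iic a)).toReal) := by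
      intro n
      rw [← toReal_Ioc_eq (μs n) hab, ENNReal.ofReal_toReal (measure_ne_top _ _)]
    refine Tendsto.congr (fun n => (heq n).symm) ?_
    exact (ENNReal.continuous_ofReal.tendsto _).comp ((hF_tend b).sub (hF_tend a))
  -- normalization
  obtain ⟨N, hN⟩ : ∃ N, 0 < (μs N Set.univ).toReal := by
    by_contra hcon
    push_neg at hcon
    exact absurd (ciSup_le fun n => hcon n) (not_le.2 hmpos)
  have hmnN : ∀ k : ℕ, 0 < (μs (k + N) Set.univ).toReal := fun k =>
    lt_of_lt_of_le hN (hmn_mono (Nat.le_add_left N k))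
  set ν : ℕ → Measure ℝ :=
    fun k => (ENNReal.ofReal ((μs (k + N) Set.univ).toReal))⁻¹ • μs (k + N) with hνdef
  haveI hνprob : ∀ k, IsProbabilityMeasure (ν k) := by
    intro k
    constructor
    simp only [hνdef, Measure.smul_apply, smul_eq_mul]
    rw [ENNReal.ofReal_toReal (measure_ne_top (μs (k + N)) Set.univ)]
    have hne0 : μs (k + N) Set.univ ≠ 0 := by
      intro h0
      have hpos := hmnN k
      rw [h0] at hpos
      simp at hpos
    exact ENNReal.inv_mul_cancel hne0 (measure_ne_top _ _)
  set νstar : Measure ℝ := (ENNReal.ofReal m)⁻¹ • μstar with hνstardef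
  haveI hνstarprob : IsProbabilityMeasure νstar := by
    constructor
    simp only [hνstardef, Measure.smul_apply, smul_eq_mul]
    rw [hμstar_univ]
    exact ENNReal.inv_mul_cancel (ENNReal.ofReal_pos.2 hmpos).ne' ENNReal.ofReal_ne_top
  set D : Set ℝ := {x | ¬ContinuousAt F x} with hDdef
  have hDc : D.Countable := hF_mono.countable_not_continuousAt
  have hkey : ∀ a b : ℝ, a ≤ b → a ∉ D → b ∉ D →
      Tendsto (fun k => ν k (Set.Ioc a b)) atTop (𝓝 (νstar (Set.Ioc a b))) := by
    intro a b hab ha hb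
    have ha' : ContinuousAt F a := not_not.1 ha
    have hb' : ContinuousAt F b := not_not.1 hb
    have h1 : Tendsto (fun k => (ENNReal.ofReal ((μs (k + N) Set.univ).toReal))⁻¹) atTop
        (𝓝 (ENNReal.ofReal m)⁻¹) := by
      exact ENNReal.tendsto_inv_iff.2 ((ENNReal.continuous_ofReal.tendsto m).comp
        (hmass_tend.comp (tendsto_add_atTop_nat N)))
    have h2 : Tendsto (fun k => μs (k + N) (Set.Ioc a b)) atTop
        (𝓝 (ENNReal.ofReal (F b - F a))) :=
      (hIoc_tend a b hab).comp (tendsto_add_atTop_nat N)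
    have h3 := ENNReal.Tendsto.mul h1 (Or.inr ENNReal.ofReal_ne_top) h2
      (Or.inr (ENNReal.inv_ne_top.2 (ENNReal.ofReal_pos.2 hmpos).ne'))
    have heq : νstar (Set.Ioc a b) = (ENNReal.ofReal m)⁻¹ * ENNReal.ofReal (F b - F a) := by
      rw [hνstardef, Measure.smul_apply, smul_eq_mul, hμstar_Ioc a b ha' hb']
    rw [heq]
    refine h3.congr fun k => ?_
    simp only [hνdef, Measure.smul_apply, smul_eq_mul]
  have hopens : ∀ U : Set ℝ, IsOpen U → νstar U ≤ atTop.liminf (fun k => ν k U) :=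
    fun U hU => le_liminf_of_key hDc hkey hU
  have hbc : ∀ g : ℝ →ᵇ ℝ,
      Tendsto (fun k => ∫ x, g x ∂(ν k)) atTop (𝓝 (∫ x, g x ∂νstar)) := by
    intro g
    refine BoundedContinuousFunction.tendsto_integral_of_forall_integral_le_liminf_integral
      ?_ g
    intro f hf
    exact MeasureTheory.integral_le_liminf_integral_of_forall_isOpen_measure_le_liminf_measure
      hf hopens
  refine ⟨μstar, hμstar_fin, ?_⟩
  intro f hf hbf
  obtain ⟨C, hC⟩ := hbf
  set g : ℝ →ᵇ ℝ := BoundedContinuousFunction.ofNormedAddCommGroup f hf C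
    (fun x => by rw [Real.norm_eq_abs]; exact hC x) with hgdef
  have hμs_eq : ∀ k : ℕ, μs (k + N) = ENNReal.ofReal ((μs (k + N) Set.univ).toReal) • ν k := by
    intro k
    rw [hνdef, smul_smul,
      ENNReal.mul_inv_cancel (ENNReal.ofReal_pos.2 (hmnN k)).ne' ENNReal.ofReal_ne_top,
      one_smul]
  have hsmul : ∀ k : ℕ, ∫ x, f x ∂(μs (k + N))
      = (μs (k + N) Set.univ).toReal * ∫ x, f x ∂(ν k) := by
    intro k
    conv_lhs => rw [hμs_eq k]
    rw [integral_smul_measure, ENNReal.toReal_ofReal ENNReal.toReal_nonneg, smul_eq_mul]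
  have hμstar_eq : μstar = ENNReal.ofReal m • νstar := by
    rw [hνstardef, smul_smul,
      ENNReal.mul_inv_cancel (ENNReal.ofReal_pos.2 hmpos).ne' ENNReal.ofReal_ne_top, one_smul]
  have hμstar_int : ∫ x, f x ∂μstar = m * ∫ x, f x ∂νstar := by
    conv_lhs => rw [hμstar_eq]
    rw [integral_smul_measure, ENNReal.toReal_ofReal hmpos.le, smul_eq_mul]
  have hgf : (fun k => ∫ x, g x ∂(ν k)) = fun k => ∫ x, f x ∂(ν k) := rfl
  have hgf2 : ∫ x, g x ∂νstar = ∫ x, f x ∂νstar := rfl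
  have hshift : Tendsto (fun k => ∫ x, f x ∂(μs (k + N))) atTop (𝓝 (∫ x, f x ∂μstar)) := by
    rw [hμstar_int]
    have hb2 : Tendsto (fun k => ∫ x, f x ∂(ν k)) atTop (𝓝 (∫ x, f x ∂νstar)) := by
      rw [← hgf2, ← hgf]; exact hbc g
    refine Tendsto.congr (fun k => (hsmul k).symm) ?_
    exact (hmass_tend.comp (tendsto_add_atTop_nat N)).mul hb2
  exact (tendsto_add_atTop_iff_nat N).1 hshift
end

section
/- Let $(\Omega, \mathcal{F}, \mathbb{P})$ be a probability space with an ergodic measure-preserving invertible transformation $\theta$, and let $\sigma \ge 0$, $\xi > 0$ be integrable random variables with $\sigma_n = \sigma\circ\theta^n$, $\xi_n = \xi\circ\theta^n$. Then the random variable $L = \left[\sup_{j \ge 1}\left(\sigma_{-j} - \sum_{i=1}^{j}\xi_{-i}\right)\right]^+$ satisfies the equation $L\circ\theta = \left[\max\{L, \sigma\} - \xi\right]^+$ almost surely. -/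
open MeasureTheory Filter Topology

lemma tsum_meas_ge_ne_top {Ω : Type*} [MeasurableSpace Ω] (P : Measure Ω)
    [IsProbabilityMeasure P] {f : Ω → ℝ} (hm : Measurable f) (hi : Integrable f P)
    {ε : ℝ} (hε : 0 < ε) : (∑' n : ℕ, P {ω | ε * n ≤ f ω}) ≠ ⊤ := by
  classical
  have key : ∀ N : ℕ, (∑ n ∈ Finset.range N, P {ω | ε * (n+1) ≤ f ω})
      ≤ ∫⁻ ω, ENNReal.ofReal (f ω / ε) ∂P := by
    intro N
    have hms : ∀ n : ℕ, MeasurableSet {ω | ε * ((n:ℝ)+1) ≤ f ω} :=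
      fun n => measurableSet_le measurable_const hm
    have hrw : ∀ n : ℕ, P {ω | ε * ((n:ℝ)+1) ≤ f ω}
        = ∫⁻ ω, Set.indicator {ω | ε * ((n:ℝ)+1) ≤ f ω} (fun _ => 1) ω ∂P := by
      intro n
      rw [lintegral_indicator (hms n)]
      simp
    simp_rw [hrw]
    rw [← lintegral_finset_sum _ (fun n _ =>
      (measurable_const.indicator (hms n)))]
    refine lintegral_mono fun ω => ?_
    by_cases h0 : 0 ≤ f ω
    · have step1 : (∑ n ∈ Finset.range N,
          Set.indicator {ω | ε * ((n:ℝ)+1) ≤ f ω} (fun _ => (1:ENNReal)) ω)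
          = (((Finset.range N).filter (fun n : ℕ => ε * ((n:ℝ)+1) ≤ f ω)).card : ENNReal) := by
        rw [Finset.card_filter]
        rw [Nat.cast_sum]
        refine Finset.sum_congr rfl fun n _ => ?_
        by_cases hn : ε * ((n:ℝ)+1) ≤ f ω
        · rw [Set.indicator_of_mem (by exact hn), if_pos hn]; simp
        · rw [Set.indicator_of_notMem (by exact hn), if_neg hn]; simp
      rw [step1]
      have hsub : (Finset.range N).filter (fun n : ℕ => ε * ((n:ℝ)+1) ≤ f ω)
          ⊆ Finset.range (Nat.floor (f ω / ε)) := by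
        intro n hn
        simp only [Finset.mem_filter, Finset.mem_range] at hn ⊢
        have : (n:ℝ) + 1 ≤ f ω / ε := by
            rw [le_div_iff₀ hε]; linarith [hn.2]
        have h2 : n + 1 ≤ Nat.floor (f ω / ε) :=
          Nat.le_floor (by push_cast; linarith)
        omega
      calc ((((Finset.range N).filter (fun n : ℕ => ε * ((n:ℝ)+1) ≤ f ω)).card : ℕ) : ENNReal)
          ≤ ((Nat.floor (f ω / ε) : ℕ) : ENNReal) := by
            have := (Finset.card_le_card hsub).trans (le_of_eq (Finset.card_range _))
            exact_mod_cast this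
        _ ≤ ENNReal.ofReal (f ω / ε) := by
            rw [← ENNReal.ofReal_natCast]
            exact ENNReal.ofReal_le_ofReal (Nat.floor_le (by positivity))
    · have : (∑ n ∈ Finset.range N,
          Set.indicator {ω | ε * ((n:ℝ)+1) ≤ f ω} (fun _ => (1:ENNReal)) ω) = 0 := by
        refine Finset.sum_eq_zero fun n _ => ?_
        refine Set.indicator_of_notMem ?_ _
        intro h
        simp only [Set.mem_setOf_eq] at h
        push_neg at h0
        nlinarith [h, h0, hε, Nat.cast_nonneg (α := ℝ) n]
      rw [this]
      exact bot_le
  have hfin : (∫⁻ ω, ENNReal.ofReal (f ω / ε) ∂P) < ⊤ :=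
    (hi.div_const ε).lintegral_lt_top
  have h1 : (∑' n : ℕ, P {ω | ε * ((n:ℝ)+1) ≤ f ω}) ≤ ∫⁻ ω, ENNReal.ofReal (f ω / ε) ∂P := by
    rw [ENNReal.tsum_eq_iSup_sum]
    refine iSup_le fun s => ?_
    obtain ⟨N, hN⟩ := s.exists_nat_subset_range
    exact le_trans (Finset.sum_le_sum_of_subset hN) (key N)
  have h2 : (∑' n : ℕ, P {ω | ε * n ≤ f ω})
      = P {ω | ε * ((0:ℕ):ℝ) ≤ f ω} + ∑' n : ℕ, P {ω | ε * (((n:ℕ):ℝ)+1) ≤ f ω} := by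
    rw [tsum_eq_zero_add' ENNReal.summable]
    push_cast
    rfl
  rw [h2]
  refine ENNReal.add_ne_top.mpr ⟨measure_ne_top P _, ?_⟩
  exact ne_top_of_le_ne_top hfin.ne h1


lemma maximal_ergodic {Ω : Type*} [MeasurableSpace Ω] (P : Measure Ω)
    [IsProbabilityMeasure P] {T : Ω → Ω} (hT : MeasurePreserving T P P)
    {f : Ω → ℝ} (hfm : Measurable f) (hfi : Integrable f P) :
    0 ≤ ∫ ω in {ω | ∃ n, 1 ≤ n ∧ 0 < birkhoffSum T f n ω}, f ω ∂P := by
  classical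
  set Phi : ℕ → Ω → ℝ := fun N => Nat.rec (motive := fun _ => Ω → ℝ)
    (fun _ => 0) (fun _ ih ω => max (f ω + ih (T ω)) 0) N with hPhidef
  have hPhiS : ∀ N ω, Phi (N+1) ω = max (f ω + Phi N (T ω)) 0 := fun _ _ => rfl
  have hPhinn : ∀ N ω, 0 ≤ Phi N ω := by
    intro N ω
    cases N with
    | zero => exact le_rfl
    | succ n => exact le_max_right _ _
  have hPhim : ∀ N, Measurable (Phi N) := by
    intro N
    induction N with
    | zero => exact measurable_const
    | succ n ih => exact (hfm.add (ih.comp hT.measurable)).max measurable_const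
  have hPhii : ∀ N, Integrable (Phi N) P := by
    intro N
    induction N with
    | zero => exact integrable_const 0
    | succ n ih =>
        have hcomp : Integrable (fun ω => Phi n (T ω)) P :=
          (hT.integrable_comp (hPhim n).aestronglyMeasurable).mpr ih
        have : Integrable (fun ω => max (f ω + Phi n (T ω)) 0) P :=
          (hfi.add hcomp).pos_part
        exact this.congr (ae_of_all _ fun ω => (hPhiS n ω).symm)
  have hcompi : ∀ N, Integrable (fun ω => Phi N (T ω)) P := fun N =>
    (hT.integrable_comp (hPhim N).aestronglyMeasurable).mpr (hPhii N)
  have hmono : ∀ ω, Monotone fun N => Phi N ω := by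
    intro ω
    refine monotone_nat_of_le_succ ?_
    intro N
    induction N generalizing ω with
    | zero => exact hPhinn 1 ω
    | succ n ih =>
        rw [hPhiS (n+1) ω]
        exact max_le_max (add_le_add_right (ih (T ω)) _) le_rfl
  -- birkhoffSum T f n ≤ Phi N for n ≤ N
  have hle : ∀ N n, n ≤ N → ∀ ω, birkhoffSum T f n ω ≤ Phi N ω := by
    intro N
    induction N with
    | zero =>
        intro n hn ω
        interval_cases n
        simpa [birkhoffSum_zero] using hPhinn 0 ω
    | succ N ih =>
        intro n hn ω
        cases n with
        | zero => simpa [birkhoffSum_zero] using hPhinn (N+1) ω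
        | succ m =>
            rw [birkhoffSum_succ', hPhiS]
            exact le_max_of_le_left
              (add_le_add_right (ih m (Nat.succ_le_succ_iff.mp hn) (T ω)) _)
  -- Phi N is attained by some birkhoff sum
  have hatt : ∀ N ω, ∃ m, m ≤ N ∧ Phi N ω = birkhoffSum T f m ω := by
    intro N
    induction N with
    | zero => exact fun ω => ⟨0, le_rfl, by rw [birkhoffSum_zero]; rfl⟩
    | succ N ih =>
        intro ω
        by_cases h : 0 ≤ f ω + Phi N (T ω)
        · obtain ⟨m, hm, heq⟩ := ih (T ω)
          refine ⟨m + 1, Nat.succ_le_succ hm, ?_⟩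
          rw [hPhiS, max_eq_left h, heq, birkhoffSum_succ']
        · refine ⟨0, Nat.zero_le _, ?_⟩
          rw [hPhiS, max_eq_right (le_of_not_ge h), birkhoffSum_zero]
  set E : ℕ → Set Ω := fun N => {ω | 0 < Phi N ω} with hEdef
  have hEm : ∀ N, MeasurableSet (E N) := fun N =>
    measurableSet_lt measurable_const (hPhim N)
  have hEmono : Monotone E := by
    intro a b hab ω hω
    exact lt_of_lt_of_le hω (hmono ω hab)
  -- the key maximal inequality on each E N
  have hintE : ∀ N, 0 ≤ ∫ ω in E N, f ω ∂P := by
    intro N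
    cases N with
    | zero =>
        have : E 0 = ∅ := by
          ext ω; simp [hEdef, hPhidef]
        simp [this]
    | succ N =>
        have hkey : ∀ ω ∈ E (N+1), Phi (N+1) ω - Phi (N+1) (T ω) ≤ f ω := by
          intro ω hω
          have hpos : 0 < Phi (N+1) ω := hω
          have heq : Phi (N+1) ω = f ω + Phi N (T ω) := by
            rw [hPhiS] at hpos ⊢
            rcases max_cases (f ω + Phi N (T ω)) 0 with ⟨h1, _⟩ | ⟨h1, h2⟩
            · exact h1
            · rw [h1] at hpos; exact absurd hpos (lt_irrefl 0)
          have : Phi N (T ω) ≤ Phi (N+1) (T ω) := hmono (T ω) (Nat.le_succ N)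
          linarith
        have hsub : Integrable (fun ω => Phi (N+1) ω - Phi (N+1) (T ω)) P :=
          (hPhii (N+1)).sub (hcompi (N+1))
        have step1 : ∫ ω in E (N+1), (Phi (N+1) ω - Phi (N+1) (T ω)) ∂P
            ≤ ∫ ω in E (N+1), f ω ∂P :=
          setIntegral_mono_on hsub.integrableOn hfi.integrableOn (hEm (N+1)) hkey
        have step2 : ∫ ω in E (N+1), (Phi (N+1) ω - Phi (N+1) (T ω)) ∂P
            = (∫ ω in E (N+1), Phi (N+1) ω ∂P) - ∫ ω in E (N+1), Phi (N+1) (T ω) ∂P :=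
          integral_sub (hPhii (N+1)).integrableOn (hcompi (N+1)).integrableOn
        have step3 : ∫ ω in E (N+1), Phi (N+1) ω ∂P = ∫ ω, Phi (N+1) ω ∂P := by
          refine setIntegral_eq_integral_of_forall_compl_eq_zero fun ω hω => ?_
          have : ¬ 0 < Phi (N+1) ω := hω
          exact le_antisymm (not_lt.mp this) (hPhinn (N+1) ω)
        have step4 : ∫ ω in E (N+1), Phi (N+1) (T ω) ∂P ≤ ∫ ω, Phi (N+1) (T ω) ∂P :=
          setIntegral_le_integral (hcompi (N+1))
            (ae_of_all _ fun ω => hPhinn (N+1) (T ω))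
        have step5 : ∫ ω, Phi (N+1) (T ω) ∂P = ∫ ω, Phi (N+1) ω ∂P := by
          conv_rhs => rw [← hT.map_eq]
          rw [integral_map hT.aemeasurable (hPhim (N+1)).aestronglyMeasurable]
        linarith
  have hG : {ω | ∃ n, 1 ≤ n ∧ 0 < birkhoffSum T f n ω} = ⋃ N, E N := by
    ext ω
    simp only [Set.mem_setOf_eq, Set.mem_iUnion]
    constructor
    · rintro ⟨n, hn1, hpos⟩
      exact ⟨n, lt_of_lt_of_le hpos (hle n n le_rfl ω)⟩
    · rintro ⟨N, hN⟩
      obtain ⟨m, hm, heq⟩ := hatt N ω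
      have hN0 : (0:ℝ) < Phi N ω := hN
      have hN' : (0:ℝ) < birkhoffSum T f m ω := heq ▸ hN0
      refine ⟨m, ?_, hN'⟩
      rcases Nat.eq_zero_or_pos m with h | h
      · subst h
        rw [birkhoffSum_zero] at hN'
        exact absurd hN' (lt_irrefl 0)
      · exact h
  rw [hG]
  have htend := tendsto_setIntegral_of_monotone hEm hEmono
    (hfi.integrableOn (s := ⋃ N, E N))
  exact ge_of_tendsto htend (Filter.Eventually.of_forall hintE)

lemma ae_linear_growth {Ω : Type*} [MeasurableSpace Ω] (P : Measure Ω)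
    [IsProbabilityMeasure P] {T : Ω → Ω} (hT : MeasurePreserving T P P)
    (hTerg : ∀ s, MeasurableSet s → T ⁻¹' s = s → P s = 0 ∨ P s = 1)
    {g : Ω → ℝ} (hgm : Measurable g) (hg0 : ∀ ω, 0 ≤ g ω) (hg1 : ∀ ω, g ω ≤ 1)
    (hgpos : 0 < ∫ ω, g ω ∂P) :
    ∀ᵐ ω ∂P, ∃ k : ℕ, ∀ᶠ n : ℕ in atTop, (n:ℝ)/(k+1) ≤ birkhoffSum T g n ω := by
  classical
  have hbSm : ∀ n, Measurable (birkhoffSum T g n) := by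
    intro n
    have : birkhoffSum T g n = fun x => ∑ i ∈ Finset.range n, g (T^[i] x) := rfl
    rw [this]
    exact Finset.measurable_sum _ fun i _ => hgm.comp (hT.measurable.iterate i)
  set A : Set Ω := {ω | ∃ k : ℕ, ∀ᶠ n : ℕ in atTop, (n:ℝ)/(k+1) ≤ birkhoffSum T g n ω}
    with hAdef
  have hAm : MeasurableSet A := by
    have : A = ⋃ k : ℕ, ⋃ N : ℕ, ⋂ n : ℕ,
        {ω | N ≤ n → (n:ℝ)/(k+1) ≤ birkhoffSum T g n ω} := by
      ext ω
      simp only [hAdef, Set.mem_setOf_eq, Set.mem_iUnion, Set.mem_iInter,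
        eventually_atTop]
    rw [this]
    refine MeasurableSet.iUnion fun k => MeasurableSet.iUnion fun N =>
      MeasurableSet.iInter fun n => ?_
    by_cases hn : N ≤ n
    · have : {ω | N ≤ n → (n:ℝ)/(k+1) ≤ birkhoffSum T g n ω}
          = {ω | (n:ℝ)/(k+1) ≤ birkhoffSum T g n ω} := by
        ext ω; simp [hn]
      rw [this]
      exact measurableSet_le measurable_const (hbSm n)
    · have : {ω | N ≤ n → (n:ℝ)/(k+1) ≤ birkhoffSum T g n ω} = Set.univ := by
        ext ω; simp [hn]
      rw [this]
      exact MeasurableSet.univ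
  have hAinv : T ⁻¹' A = A := by
    ext ω
    simp only [Set.mem_preimage, hAdef, Set.mem_setOf_eq, eventually_atTop]
    constructor
    · rintro ⟨k, N, hN⟩
      refine ⟨2*k+1, N + 2, fun m hm => ?_⟩
      obtain ⟨n, rfl⟩ : ∃ n, m = n + 1 := ⟨m - 1, by omega⟩
      have hn : N ≤ n := by omega
      have hn1 : (1:ℝ) ≤ n := by exact_mod_cast (by omega : 1 ≤ n)
      have h1 : (n:ℝ)/(k+1) ≤ birkhoffSum T g n (T ω) := hN n hn
      have h2 : birkhoffSum T g (n+1) ω = g ω + birkhoffSum T g n (T ω) :=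
        birkhoffSum_succ' T g n ω
      have hk1 : (0:ℝ) < k + 1 := by positivity
      have key : ((n:ℝ)+1)/(2*(k:ℝ)+1+1) ≤ (n:ℝ)/(k+1) := by
        rw [div_le_div_iff₀ (by positivity) hk1]
        ring_nf
        nlinarith [hn1]
      push_cast
      calc ((n:ℝ)+1)/(2*(k:ℝ)+1+1) ≤ (n:ℝ)/(k+1) := key
        _ ≤ birkhoffSum T g n (T ω) := h1
        _ ≤ g ω + birkhoffSum T g n (T ω) := by linarith [hg0 ω]
        _ = birkhoffSum T g (n+1) ω := h2.symm
    · rintro ⟨k, N, hN⟩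
      refine ⟨2*k+1, N + 2*k + 2, fun n hn => ?_⟩
      have h1 : ((n:ℝ)+1)/(k+1) ≤ birkhoffSum T g (n+1) ω := by
        have := hN (n+1) (by omega)
        push_cast at this ⊢
        exact this
      have h2 : birkhoffSum T g n (T ω) = birkhoffSum T g (n+1) ω - g ω := by
        rw [birkhoffSum_succ' T g n ω]; ring
      have hn2k : (2*(k:ℝ)) ≤ n := by exact_mod_cast (by omega : 2*k ≤ n)
      have key : (n:ℝ)/(2*(k:ℝ)+1+1) ≤ ((n:ℝ)+1)/(k+1) - 1 := by
        rw [show ((n:ℝ)+1)/((k:ℝ)+1) - 1 = ((n:ℝ)-(k:ℝ))/((k:ℝ)+1) by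
          field_simp; ring]
        rw [div_le_div_iff₀ (by positivity) (by positivity)]
        nlinarith [hn2k, Nat.cast_nonneg (α := ℝ) k]
      push_cast
      calc (n:ℝ)/(2*(k:ℝ)+1+1) ≤ ((n:ℝ)+1)/(k+1) - 1 := key
        _ ≤ birkhoffSum T g (n+1) ω - g ω := by linarith [h1, hg1 ω]
        _ = birkhoffSum T g n (T ω) := h2.symm
  rcases hTerg A hAm hAinv with h0 | h1
  · -- contradiction with maximal ergodic theorem
    exfalso
    have hgi : Integrable g P :=
      (integrable_const (1:ℝ)).mono' hgm.aestronglyMeasurable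
        (ae_of_all _ fun ω => by
          rw [Real.norm_eq_abs, abs_of_nonneg (hg0 ω)]; exact hg1 ω)
    obtain ⟨k0, hk0⟩ := exists_nat_gt (2 / ∫ ω, g ω ∂P)
    have hk0' : (2:ℝ) / ∫ ω, g ω ∂P < k0 + 1 := lt_trans hk0 (by linarith)
    have hε : (1:ℝ)/(k0+1) < (∫ ω, g ω ∂P)/2 := by
      rw [div_lt_div_iff₀ (by positivity) (by norm_num)]
      rw [div_lt_iff₀ hgpos] at hk0'
      linarith
    set f : Ω → ℝ := fun ω => 1/(k0+1) - g ω with hfdef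
    have hfm : Measurable f := measurable_const.sub hgm
    have hfi : Integrable f P := (integrable_const _).sub hgi
    have hbSf : ∀ n ω, birkhoffSum T f n ω = n/(k0+1) - birkhoffSum T g n ω := by
      intro n ω
      simp only [hfdef, birkhoffSum, Finset.sum_sub_distrib, Finset.sum_const,
        Finset.card_range, nsmul_eq_mul]
      ring
    have hae : ∀ᵐ ω ∂P, ω ∈ {ω | ∃ n, 1 ≤ n ∧ 0 < birkhoffSum T f n ω} := by
      have hAc : ∀ᵐ ω ∂P, ω ∉ A := by
        rw [← measure_eq_zero_iff_ae_notMem]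
        exact h0
      filter_upwards [hAc] with ω hω
      have : ¬ ∀ᶠ n : ℕ in atTop, (n:ℝ)/(k0+1) ≤ birkhoffSum T g n ω := by
        intro h; exact hω ⟨k0, h⟩
      rw [not_eventually] at this
      obtain ⟨n, hn1, hn⟩ := (frequently_atTop.mp this) 1
      push_neg at hn
      exact ⟨n, hn1, by rw [hbSf]; linarith⟩
    have hrestrict : P.restrict {ω | ∃ n, 1 ≤ n ∧ 0 < birkhoffSum T f n ω} = P :=
      Measure.restrict_eq_self_of_ae_mem hae
    have hmax := maximal_ergodic P hT hfm hfi
    rw [hrestrict] at hmax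
    have : ∫ ω, f ω ∂P = 1/(k0+1) - ∫ ω, g ω ∂P := by
      rw [hfdef]
      rw [integral_sub (integrable_const _) hgi, integral_const]
      simp
    rw [this] at hmax
    linarith
  · have : P Aᶜ = 0 := by
      rw [measure_compl hAm (measure_ne_top P A), h1]
      simp
    have hmem : ∀ᵐ ω ∂P, ω ∈ A := by
      rw [ae_iff]
      have : {ω | ¬ ω ∈ A} = Aᶜ := rfl
      rw [this]
      exact ‹P Aᶜ = 0›
    exact hmem

lemma ae_sublinear {Ω : Type*} [MeasurableSpace Ω] (P : Measure Ω)
    [IsProbabilityMeasure P] {T : Ω → Ω} (hT : MeasurePreserving T P P)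
    {f : Ω → ℝ} (hfm : Measurable f) (hfi : Integrable f P) {ε : ℝ} (hε : 0 < ε) :
    ∀ᵐ ω ∂P, ∀ᶠ n : ℕ in atTop, f (T^[n] ω) < ε * n := by
  set s : ℕ → Set Ω := fun n => T^[n] ⁻¹' {ω | ε * n ≤ f ω} with hsdef
  have hsum : (∑' n, P (s n)) ≠ ⊤ := by
    have : ∀ n, P (s n) = P {ω | ε * n ≤ f ω} := fun n =>
      (hT.iterate n).measure_preimage
        (measurableSet_le measurable_const hfm).nullMeasurableSet
    simp_rw [this]
    exact tsum_meas_ge_ne_top P hfm hfi hε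
  filter_upwards [ae_eventually_notMem hsum] with ω hω
  filter_upwards [hω] with n hn
  simp only [hsdef, Set.mem_preimage, Set.mem_setOf_eq] at hn
  linarith [not_le.mp hn]


/-- The Loynes variable `L = [sup_{j ≥ 1} (σ_{-j} - ∑_{i=1}^{j} ξ_{-i})]⁺`,
where `σ_{-j} = σ ∘ θ⁻ʲ` and `ξ_{-i} = ξ ∘ θ⁻ⁱ`. -/
noncomputable def Lfun {Ω : Type*} (θinv : Ω → Ω) (σ ξ : Ω → ℝ) (ω : Ω) : ℝ :=
  max (⨆ j : ℕ, (σ (θinv^[j + 1] ω) - ∑ i ∈ Finset.range (j + 1), ξ (θinv^[i + 1] ω))) 0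

/-- `L` solves the equation `L ∘ θ = [max{L, σ} - ξ]⁺` almost surely. -/
theorem stmt6 {Ω : Type*} [MeasurableSpace Ω] (P : Measure Ω) [IsProbabilityMeasure P]
    (θ θinv : Ω → Ω) (hθ : Ergodic θ P) (hθinv : Measurable θinv)
    (hli : Function.LeftInverse θinv θ) (hri : Function.RightInverse θinv θ)
    (σ ξ : Ω → ℝ) (hσint : Integrable σ P) (hξint : Integrable ξ P)
    (hσ0 : ∀ ω, 0 ≤ σ ω) (hξ0 : ∀ ω, 0 < ξ ω) :
    ∀ᵐ ω ∂P,
      Lfun θinv σ ξ (θ ω) = max (max (Lfun θinv σ ξ ω) (σ ω) - ξ ω) 0 := by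
  classical
  set T := θinv with hTdef
  have hθm : Measurable θ := hθ.toMeasurePreserving.measurable
  have hT : MeasurePreserving T P P := by
    refine ⟨hθinv, ?_⟩
    have h1 : P.map θ = P := hθ.toMeasurePreserving.map_eq
    calc P.map T = (P.map θ).map T := by rw [h1]
      _ = P.map (T ∘ θ) := Measure.map_map hθinv hθm
      _ = P.map id := by rw [show T ∘ θ = id from funext hli]
      _ = P := Measure.map_id
  have hTerg : ∀ s, MeasurableSet s → T ⁻¹' s = s → P s = 0 ∨ P s = 1 := by
    intro s hs hinv
    have hθinv' : θ ⁻¹' s = s := by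
      conv_lhs => rw [← hinv]
      ext ω
      simp only [Set.mem_preimage, hli ω]
    rcases hθ.ae_empty_or_univ hs hθinv' with h | h
    · exact Or.inl (ae_eq_empty.mp h)
    · right
      calc P s = P Set.univ := measure_congr h
        _ = 1 := measure_univ
  -- measurable versions of σ and ξ
  set σ' : Ω → ℝ := hσint.aestronglyMeasurable.mk σ with hσ'def
  have hσ'm : Measurable σ' := hσint.aestronglyMeasurable.stronglyMeasurable_mk.measurable
  have hσeq : σ =ᵐ[P] σ' := hσint.aestronglyMeasurable.ae_eq_mk
  have hσ'int : Integrable σ' P := hσint.congr hσeq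
  set ξ' : Ω → ℝ := hξint.aestronglyMeasurable.mk ξ with hξ'def
  have hξ'm : Measurable ξ' := hξint.aestronglyMeasurable.stronglyMeasurable_mk.measurable
  have hξeq : ξ =ᵐ[P] ξ' := hξint.aestronglyMeasurable.ae_eq_mk
  -- truncated version of ξ
  set g : Ω → ℝ := fun ω => min (max (ξ' ω) 0) 1 with hgdef
  have hgm : Measurable g := (hξ'm.max measurable_const).min measurable_const
  have hg0 : ∀ ω, 0 ≤ g ω := fun ω => le_min (le_max_right _ _) zero_le_one
  have hg1 : ∀ ω, g ω ≤ 1 := fun ω => min_le_right _ _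
  have hgi : Integrable g P :=
    (integrable_const (1:ℝ)).mono' hgm.aestronglyMeasurable
      (ae_of_all _ fun ω => by
        rw [Real.norm_eq_abs, abs_of_nonneg (hg0 ω)]; exact hg1 ω)
  have hgposae : ∀ᵐ ω ∂P, 0 < g ω := by
    filter_upwards [hξeq] with ω h
    rw [hgdef]
    simp only
    rw [← h, max_eq_left (hξ0 ω).le]
    exact lt_min (hξ0 ω) zero_lt_one
  haveI : (MeasureTheory.ae P).NeBot := ae_neBot.mpr (IsProbabilityMeasure.ne_zero P)
  have hgpos : 0 < ∫ ω, g ω ∂P := by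
    rcases lt_or_eq_of_le (integral_nonneg (f := g) (fun ω => hg0 ω)) with h | h
    · exact h
    · exfalso
      have hz : g =ᵐ[P] 0 :=
        (integral_eq_zero_iff_of_nonneg hg0 hgi).mp h.symm
      obtain ⟨ω, h1, h2⟩ := (hgposae.and hz).exists
      rw [h2] at h1
      exact lt_irrefl _ h1
  -- asymptotic events
  have hgrow := ae_linear_growth P hT hTerg hgm hg0 hg1 hgpos
  have hsub : ∀ᵐ ω ∂P, ∀ k : ℕ, ∀ᶠ n : ℕ in atTop,
      σ' (T^[n] ω) < (1/((k:ℝ)+1)) * n := by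
    rw [ae_all_iff]
    intro k
    exact ae_sublinear P hT hσ'm hσ'int (by positivity)
  have hver : ∀ᵐ ω ∂P, ∀ n : ℕ, ξ (T^[n] ω) = ξ' (T^[n] ω) := by
    rw [ae_all_iff]
    intro n
    exact (hT.iterate n).quasiMeasurePreserving.ae_eq hξeq
  have hσver : ∀ᵐ ω ∂P, ∀ n : ℕ, σ (T^[n] ω) = σ' (T^[n] ω) := by
    rw [ae_all_iff]
    intro n
    exact (hT.iterate n).quasiMeasurePreserving.ae_eq hσeq
  -- the boundedness property
  have hQae : ∀ᵐ x ∂P, BddAbove (Set.range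
      (fun j : ℕ => σ (T^[j] x) - birkhoffSum T ξ (j+1) x)) := by
    filter_upwards [hgrow, hsub, hver, hσver] with x h1 h2 h3 h4
    obtain ⟨k, hk⟩ := h1
    obtain ⟨N1, hN1⟩ := eventually_atTop.mp hk
    obtain ⟨N2, hN2⟩ := eventually_atTop.mp (h2 (2*k+1))
    set N := max N1 N2 with hNdef
    have hev : ∀ j, N ≤ j → (σ (T^[j] x) - birkhoffSum T ξ (j+1) x) ≤ 0 := by
      intro j hj
      have e1 : ((j+1:ℕ):ℝ)/((k:ℝ)+1) ≤ birkhoffSum T g (j+1) x :=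
        hN1 (j+1) (le_trans (le_max_left _ _) (Nat.le_succ_of_le hj))
      have e2 := hN2 j (le_trans (le_max_right _ _) hj)
      have e3 : birkhoffSum T g (j+1) x ≤ birkhoffSum T ξ (j+1) x := by
        refine Finset.sum_le_sum fun i _ => ?_
        have hxi := h3 i
        calc g (T^[i] x) ≤ max (ξ' (T^[i] x)) 0 := min_le_left _ _
          _ = max (ξ (T^[i] x)) 0 := by rw [hxi]
          _ = ξ (T^[i] x) := max_eq_left (hξ0 _).le
      have e4 : σ (T^[j] x) = σ' (T^[j] x) := h4 j
      set c : ℝ := (k:ℝ) + 1 with hcdef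
      have hc : (0:ℝ) < c := by positivity
      have hj0 : (0:ℝ) ≤ (j:ℝ) := Nat.cast_nonneg j
      have e2' : σ' (T^[j] x) < (j:ℝ)/(2*c) := by
        have heq : (1/(((2*k+1:ℕ):ℝ)+1)) * (j:ℝ) = (j:ℝ)/(2*c) := by
          rw [hcdef]
          push_cast
          ring
        rw [← heq]
        exact e2
      have e1' : (j:ℝ)/c ≤ birkhoffSum T g (j+1) x := by
        refine le_trans ?_ e1
        rw [hcdef]
        gcongr
        · push_cast
          linarith
      have hhalf : (j:ℝ)/(2*c) ≤ (j:ℝ)/c := by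
        apply div_le_div_of_nonneg_left hj0 hc
        linarith
      rw [e4]
      linarith
    refine BddAbove.mono ?_ (BddAbove.union
      ((Set.finite_Iic N).image
        (fun j : ℕ => σ (T^[j] x) - birkhoffSum T ξ (j+1) x)).bddAbove
      (bddAbove_Iic : BddAbove (Set.Iic (0:ℝ))))
    rintro _ ⟨j, rfl⟩
    by_cases hj : j ≤ N
    · exact Or.inl ⟨j, Set.mem_Iic.mpr hj, rfl⟩
    · exact Or.inr (Set.mem_Iic.mpr (hev j (le_of_lt (not_le.mp hj))))
  -- transfer to T x
  have hQT : ∀ᵐ ω ∂P, BddAbove (Set.range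
      (fun j : ℕ => σ (T^[j] (T ω)) - birkhoffSum T ξ (j+1) (T ω))) :=
    hT.quasiMeasurePreserving.ae hQae
  filter_upwards [hQT] with ω hb
  set b : ℕ → ℝ := fun j => σ (T^[j] (T ω)) - birkhoffSum T ξ (j+1) (T ω) with hbdef
  set a : ℕ → ℝ := fun j => σ (T^[j] ω) - birkhoffSum T ξ (j+1) ω with hadef
  have hbody_b : Lfun θinv σ ξ ω = max (⨆ j, b j) 0 := by
    rfl
  have hbody_a : Lfun θinv σ ξ (θ ω) = max (⨆ j, a j) 0 := by
    have hli' : ∀ y, θinv (θ y) = y := fun y => hli y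
    unfold Lfun
    congr 1
    refine iSup_congr fun j => ?_
    simp only [hadef, birkhoffSum, Function.iterate_succ_apply, ← hTdef, hli ω]
  have ha0 : a 0 = σ ω - ξ ω := by
    rw [hadef]
    simp [birkhoffSum_one]
  have haS : ∀ j, a (j+1) = b j - ξ ω := by
    intro j
    rw [hadef, hbdef]
    simp only
    rw [birkhoffSum_succ' T ξ (j+1) ω, Function.iterate_succ_apply]
    ring
  have ha_bdd : BddAbove (Set.range a) := by
    obtain ⟨M, hM⟩ := hb
    refine ⟨max (a 0) (M - ξ ω), ?_⟩
    rintro _ ⟨j, rfl⟩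
    cases j with
    | zero => exact le_max_left _ _
    | succ j =>
        rw [haS j]
        exact le_max_of_le_right (sub_le_sub_right (hM ⟨j, rfl⟩) _)
  have hXa : (⨆ j, a j) = max (σ ω) (⨆ j, b j) - ξ ω := by
    refine le_antisymm (ciSup_le fun j => ?_) ?_
    · cases j with
      | zero =>
          rw [ha0]
          exact sub_le_sub_right (le_max_left _ _) _
      | succ j =>
          rw [haS j]
          exact sub_le_sub_right ((le_ciSup hb j).trans (le_max_right _ _)) _
    · rw [sub_le_iff_le_add]
      refine max_le ?_ ?_
      · have := le_ciSup ha_bdd 0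
        rw [ha0] at this
        linarith
      · have h2 : (⨆ j, b j) ≤ (⨆ j, a j) + ξ ω := by
          refine ciSup_le fun j => ?_
          have := le_ciSup ha_bdd (j+1)
          rw [haS j] at this
          linarith
        linarith
  rw [hbody_a, hbody_b, hXa]
  have hmx : max (max (⨆ j, b j) 0) (σ ω) = max (σ ω) (⨆ j, b j) := by
    rw [max_assoc, max_eq_right (hσ0 ω), max_comm]
  rw [hmx]
end

section
/- With the setup of the previous statement ($\theta$ ergodic measure-preserving, $\sigma \ge 0$ and $\xi > 0$ integrable with $\mathbb{E}[\xi] > 0$), the random variable $L = \left[\sup_{j\ge 1}(\sigma_{-j} - \sum_{i=1}^j \xi_{-i})\right]^+$ is almost surely finite. -/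
open MeasureTheory Filter Topology
open scoped ENNReal

/-- A real sequence that is eventually bounded above is bounded above. -/
lemma aux_bddAbove_range_of_eventually {u : ℕ → ℝ} {C : ℝ} {J : ℕ}
    (h : ∀ j, J ≤ j → u j ≤ C) :
    BddAbove (Set.range u) := by
  refine ⟨max C 0 + ∑ i ∈ Finset.range J, |u i|, ?_⟩
  rintro _ ⟨j, rfl⟩
  have hsum : (0:ℝ) ≤ ∑ i ∈ Finset.range J, |u i| :=
    Finset.sum_nonneg fun i _ => abs_nonneg _
  by_cases hj : J ≤ j
  · have := h j hj
    have := le_max_left C (0:ℝ)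
    linarith
  · push_neg at hj
    have h1 : u j ≤ |u j| := le_abs_self _
    have h2 : |u j| ≤ ∑ i ∈ Finset.range J, |u i| :=
      Finset.single_le_sum (fun i _ => abs_nonneg (u i)) (Finset.mem_range.mpr hj)
    have := le_max_right C (0:ℝ)
    linarith

/-- Layer-cake type summability: for an integrable function `g` and `c > 0`,
`∑ₙ P {c (n+1) ≤ g} < ∞`. -/
lemma aux_tsum_meas_ne_top {Ω : Type*} [MeasurableSpace Ω] (P : Measure Ω)
    [IsProbabilityMeasure P] {g : Ω → ℝ} (hg : Measurable g) (hgi : Integrable g P)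
    {c : ℝ} (hc : 0 < c) :
    (∑' n : ℕ, P {ω | c * (n + 1) ≤ g ω}) ≠ ∞ := by
  have hmeas : ∀ n : ℕ, MeasurableSet {ω | c * (n + 1) ≤ g ω} := fun n =>
    measurableSet_le measurable_const hg
  have h1 : ∀ n : ℕ, P {ω | c * (n + 1) ≤ g ω}
      = ∫⁻ ω, Set.indicator {ω' | c * (n + 1) ≤ g ω'} (1 : Ω → ℝ≥0∞) ω ∂P := by
    intro n
    rw [lintegral_indicator_one (hmeas n)]
  have h2 : (∑' n : ℕ, P {ω | c * (n + 1) ≤ g ω})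
      = ∫⁻ ω, ∑' n : ℕ, Set.indicator {ω' | c * (n + 1) ≤ g ω'} (1 : Ω → ℝ≥0∞) ω ∂P := by
    simp_rw [h1]
    rw [← lintegral_tsum fun n => (measurable_one.indicator (hmeas n)).aemeasurable]
  rw [h2]
  have hbound : ∀ ω, (∑' n : ℕ,
      Set.indicator {ω' | c * (n + 1) ≤ g ω'} (1 : Ω → ℝ≥0∞) ω)
      ≤ ENNReal.ofReal (g ω / c) := by
    intro ω
    set m : ℕ := ⌊g ω / c⌋₊ with hm
    have hsub : ∀ n : ℕ, Set.indicator {ω' | c * (n + 1) ≤ g ω'} (1 : Ω → ℝ≥0∞) ω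
        ≤ Set.indicator (↑(Finset.range m) : Set ℕ) (1 : ℕ → ℝ≥0∞) n := by
      intro n
      by_cases hn : ω ∈ {ω' | c * (n + 1) ≤ g ω'}
      · rw [Set.indicator_of_mem hn]
        have hle : ((n : ℝ) + 1) ≤ g ω / c := by
          rw [le_div_iff₀ hc]
          have : c * (n + 1) ≤ g ω := hn
          linarith [this]
        have : n + 1 ≤ m := Nat.le_floor (by push_cast; linarith)
        have hnm : n ∈ Finset.range m := Finset.mem_range.mpr (by omega)
        rw [Set.indicator_of_mem (by simpa using hnm)]
        simp
      · rw [Set.indicator_of_notMem hn]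
        exact zero_le
    calc (∑' n : ℕ, Set.indicator {ω' | c * (n + 1) ≤ g ω'} (1 : Ω → ℝ≥0∞) ω)
        ≤ ∑' n : ℕ, Set.indicator (↑(Finset.range m) : Set ℕ) (1 : ℕ → ℝ≥0∞) n :=
          ENNReal.tsum_le_tsum hsub
      _ = ∑ n ∈ Finset.range m, (1 : ℕ → ℝ≥0∞) n := by
          rw [tsum_eq_sum (s := Finset.range m)]
          · exact Finset.sum_congr rfl fun n hn => Set.indicator_of_mem (by simpa using hn) _
          · intro n hn
            exact Set.indicator_of_notMem (by simpa using hn) _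
      _ = (m : ℝ≥0∞) := by simp
      _ ≤ ENNReal.ofReal (g ω / c) := by
          by_cases hpos : 0 ≤ g ω / c
          · rw [← ENNReal.ofReal_natCast]
            exact ENNReal.ofReal_le_ofReal (Nat.floor_le hpos)
          · push_neg at hpos
            rw [hm, Nat.floor_of_nonpos hpos.le]
            simp
  refine ne_top_of_le_ne_top ?_ (lintegral_mono hbound)
  have hi : Integrable (fun ω => g ω / c) P := hgi.div_const c
  have := hi.2
  rw [hasFiniteIntegral_iff_norm] at this
  refine ne_top_of_le_ne_top this.ne (lintegral_mono fun ω => ?_)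
  exact ENNReal.ofReal_le_ofReal (le_abs_self _)

/-- Maximal-ergodic-type result (Garsia's argument): if `T` is measure preserving,
a measurable embedding, "ergodic" in the sense below, and `f` is integrable with
negative mean, then the Birkhoff sums of `f` along `T` are a.s. bounded above. -/
lemma aux_ae_bddAbove_sums {Ω : Type*} [MeasurableSpace Ω] (P : Measure Ω)
    [IsProbabilityMeasure P] (T : Ω → Ω) (hTm : Measurable T)
    (hT : MeasurePreserving T P P) (hemb : MeasurableEmbedding T)
    (herg : ∀ s : Set Ω, MeasurableSet s → T ⁻¹' s = s → P s = 0 ∨ P s = 1)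
    (f : Ω → ℝ) (hf : Measurable f) (hfi : Integrable f P)
    (hneg : ∫ ω, f ω ∂P < 0) :
    ∀ᵐ ω ∂P, BddAbove (Set.range fun n : ℕ => ∑ i ∈ Finset.range n, f (T^[i] ω)) := by
  set S : ℕ → Ω → ℝ := fun n ω => ∑ i ∈ Finset.range n, f (T^[i] ω) with hSdef
  have hS : ∀ n, Measurable (S n) := fun n =>
    Finset.measurable_sum _ fun i _ => hf.comp (hTm.iterate i)
  have hSi : ∀ n, Integrable (S n) P := by
    intro n
    exact integrable_finset_sum _ fun i _ =>
      ((hT.iterate i).integrable_comp hfi.aestronglyMeasurable).mpr hfi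
  have hrec : ∀ n ω, S (n + 1) ω = f ω + S n (T ω) := by
    intro n ω
    rw [hSdef]
    simp only
    rw [Finset.sum_range_succ']
    simp only [Function.iterate_succ_apply, Function.iterate_zero_apply]
    ring
  have hS0 : ∀ ω, S 0 ω = 0 := fun ω => by simp [hSdef]
  set E : Set Ω := {ω | ∀ m : ℕ, ∃ n : ℕ, (m : ℝ) < S n ω} with hEdef
  have hEmeas : MeasurableSet E := by
    have : E = ⋂ m : ℕ, ⋃ n : ℕ, {ω | (m : ℝ) < S n ω} := by
      ext ω; simp [hEdef]
    rw [this]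
    exact MeasurableSet.iInter fun m => MeasurableSet.iUnion fun n =>
      measurableSet_lt measurable_const (hS n)
  have hinv : T ⁻¹' E = E := by
    ext ω
    constructor
    · intro hω m
      have hω' : T ω ∈ E := hω
      obtain ⟨n, hn⟩ := hω' ⌈(m : ℝ) - f ω⌉₊
      refine ⟨n + 1, ?_⟩
      rw [hrec]
      have h1 : (m : ℝ) - f ω ≤ ⌈(m : ℝ) - f ω⌉₊ := Nat.le_ceil _
      linarith
    · intro hω m
      obtain ⟨n, hn⟩ := hω ⌈(m : ℝ) + f ω⌉₊
      match n with
      | 0 =>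
          exfalso
          rw [hS0] at hn
          have h0 : (0:ℝ) ≤ (⌈(m : ℝ) + f ω⌉₊ : ℝ) := Nat.cast_nonneg _
          linarith
      | Nat.succ k =>
          refine ⟨k, ?_⟩
          rw [hrec] at hn
          have h1 : (m : ℝ) + f ω ≤ ⌈(m : ℝ) + f ω⌉₊ := Nat.le_ceil _
          linarith
  rcases herg E hEmeas hinv with h0 | h1
  · -- P E = 0 : almost surely bounded above
    rw [ae_iff]
    refine measure_mono_null ?_ h0
    intro ω hω
    simp only [Set.mem_setOf_eq] at hω ⊢
    intro m
    by_contra hc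
    push_neg at hc
    exact hω ⟨(m : ℝ), by rintro _ ⟨n, rfl⟩; exact hc n⟩
  · -- P E = 1 : contradiction with the maximal ergodic inequality
    exfalso
    set M : ℕ → Ω → ℝ := fun N ω =>
      (Finset.range (N + 1)).sup' (by simp) (fun n => S n ω) with hMdef
    have hMsucc : ∀ N ω, M (N + 1) ω = max (S (N + 1) ω) (M N ω) := by
      intro N ω
      apply le_antisymm
      · apply Finset.sup'_le
        intro n hn
        rw [Finset.mem_range] at hn
        rcases Nat.lt_succ_iff_lt_or_eq.mp hn with h | h
        · exact le_max_of_le_right (Finset.le_sup' (fun k => S k ω) (Finset.mem_range.mpr h))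
        · exact le_max_of_le_left (le_of_eq (by rw [h]))
      · apply max_le
        · exact Finset.le_sup' (fun k => S k ω) (Finset.mem_range.mpr (by omega))
        · exact Finset.sup'_mono (fun n => S n ω)
            (Finset.range_subset_range.mpr (by omega)) (by simp)
    have hM0eq : ∀ ω, M 0 ω = S 0 ω := by
      intro ω; rw [hMdef]; simp
    have hMmeas : ∀ N, Measurable (M N) := by
      intro N
      induction N with
      | zero => simpa [funext (hM0eq)] using hS 0
      | succ k ih =>
          have : M (k + 1) = fun ω => max (S (k + 1) ω) (M k ω) := funext (hMsucc k)
          rw [this]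
          exact (hS (k + 1)).max ih
    have hMi : ∀ N, Integrable (M N) P := by
      intro N
      induction N with
      | zero => simpa [funext (hM0eq)] using hSi 0
      | succ k ih =>
          have : M (k + 1) = fun ω => max (S (k + 1) ω) (M k ω) := funext (hMsucc k)
          rw [this]
          exact (hSi (k + 1)).sup ih
    have hM0 : ∀ N ω, 0 ≤ M N ω := by
      intro N ω
      have h := Finset.le_sup' (fun n => S n ω) (Finset.mem_range.mpr (Nat.succ_pos N))
      rw [hS0] at h
      exact h
    have hle_sup : ∀ N n ω, n ∈ Finset.range (N + 1) → S n ω ≤ M N ω := by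
      intro N n ω hn
      exact Finset.le_sup' (fun k => S k ω) hn
    -- key pointwise inequality
    have key : ∀ N ω, M N ω - M N (T ω) ≤
        Set.indicator {ω' | 0 < M N ω'} f ω := by
      intro N ω
      by_cases h : 0 < M N ω
      · rw [Set.indicator_of_mem (show ω ∈ {ω' | 0 < M N ω'} from h)]
        have hsuff : M N ω ≤ f ω + M N (T ω) := by
          obtain ⟨n₀, hn₀mem, hn₀⟩ :=
            Finset.exists_mem_eq_sup' (s := Finset.range (N + 1)) (by simp)
              (fun n => S n ω)
          have hMn₀ : M N ω = S n₀ ω := hn₀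
          match n₀ with
          | 0 =>
              rw [hMn₀, hS0] at h
              exact absurd h (lt_irrefl 0)
          | Nat.succ k =>
              have hkmem : k ∈ Finset.range (N + 1) := by
                rw [Finset.mem_range] at hn₀mem ⊢; omega
              have := hle_sup N k (T ω) hkmem
              rw [hMn₀, hrec]
              linarith
        linarith
      · rw [Set.indicator_of_notMem (show ω ∉ {ω' | 0 < M N ω'} from h)]
        have h1 := hM0 N (T ω)
        have h2 := not_lt.mp h
        linarith
    -- integrate the key inequality
    have hEN_meas : ∀ N, MeasurableSet {ω' | 0 < M N ω'} := fun N =>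
      measurableSet_lt measurable_const (hMmeas N)
    have hMTi : ∀ N, Integrable (fun ω => M N (T ω)) P := fun N =>
      (hT.integrable_comp (hMi N).aestronglyMeasurable).mpr (hMi N)
    have hineq : ∀ N, (0 : ℝ) ≤ ∫ ω in {ω' | 0 < M N ω'}, f ω ∂P := by
      intro N
      have hzero : ∫ ω, (M N ω - M N (T ω)) ∂P = 0 := by
        rw [integral_sub (hMi N) (hMTi N)]
        rw [hT.integral_comp hemb (M N)]
        ring
      have hmono : ∫ ω, (M N ω - M N (T ω)) ∂P
          ≤ ∫ ω, Set.indicator {ω' | 0 < M N ω'} f ω ∂P := by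
        refine integral_mono ((hMi N).sub (hMTi N)) (hfi.indicator (hEN_meas N)) ?_
        exact key N
      rw [hzero] at hmono
      rwa [integral_indicator (hEN_meas N)] at hmono
    -- monotone limit
    have hMmono : ∀ N ω, M N ω ≤ M (N + 1) ω := by
      intro N ω
      rw [hMsucc]
      exact le_max_right _ _
    have hmonoE : Monotone (fun N => {ω' | 0 < M N ω'}) := by
      refine monotone_nat_of_le_succ fun N ω hω => ?_
      simp only [Set.mem_setOf_eq] at hω ⊢
      exact lt_of_lt_of_le hω (hMmono N ω)
    have htend : Tendsto (fun N => ∫ ω in {ω' | 0 < M N ω'}, f ω ∂P) atTop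
        (𝓝 (∫ ω in ⋃ N, {ω' | 0 < M N ω'}, f ω ∂P)) :=
      tendsto_setIntegral_of_monotone hEN_meas hmonoE hfi.integrableOn
    have hlim : (0 : ℝ) ≤ ∫ ω in ⋃ N, {ω' | 0 < M N ω'}, f ω ∂P :=
      ge_of_tendsto' htend hineq
    -- the union contains E, which has full measure
    have hsubE : E ⊆ ⋃ N, {ω' | 0 < M N ω'} := by
      intro ω hω
      obtain ⟨n, hn⟩ := hω 0
      have hn' : (0 : ℝ) < S n ω := by exact_mod_cast hn
      refine Set.mem_iUnion.mpr ⟨n, ?_⟩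
      have := hle_sup n n ω (Finset.mem_range.mpr (Nat.lt_succ_self n))
      simp only [Set.mem_setOf_eq]
      linarith
    have hfull : P (⋃ N, {ω' | 0 < M N ω'}) = 1 := by
      refine le_antisymm prob_le_one ?_
      rw [← h1]
      exact measure_mono hsubE
    have hcomplzero : P (⋃ N, {ω' | 0 < M N ω'})ᶜ = 0 := by
      rw [measure_compl (MeasurableSet.iUnion hEN_meas) (measure_ne_top P _), hfull,
        measure_univ]
      simp
    have haemem : ∀ᵐ ω ∂P, ω ∈ ⋃ N, {ω' | 0 < M N ω'} := by
      rw [Filter.eventually_iff, Set.setOf_mem_eq]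
      exact mem_ae_iff.mpr hcomplzero
    have heq : ∫ ω in ⋃ N, {ω' | 0 < M N ω'}, f ω ∂P = ∫ ω, f ω ∂P := by
      rw [← integral_indicator (MeasurableSet.iUnion hEN_meas)]
      refine integral_congr_ae ?_
      filter_upwards [haemem] with ω hω
      exact Set.indicator_of_mem hω f
    rw [heq] at hlim
    linarith

set_option maxHeartbeats 2000000 in
/-- The supremum defining `L` is almost surely finite, i.e. the family
`(σ_{-j} - ∑_{i=1}^{j} ξ_{-i})_{j ≥ 1}` is a.s. bounded above. -/
theorem stmt7 {Ω : Type*} [MeasurableSpace Ω] (P : Measure Ω) [IsProbabilityMeasure P]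
    (θ θinv : Ω → Ω) (hθ : Ergodic θ P) (hθinv : Measurable θinv)
    (hli : Function.LeftInverse θinv θ) (hri : Function.RightInverse θinv θ)
    (σ ξ : Ω → ℝ) (hσint : Integrable σ P) (hξint : Integrable ξ P)
    (hσ0 : ∀ ω, 0 ≤ σ ω) (hξ0 : ∀ ω, 0 < ξ ω)
    (hmean : 0 < ∫ ω, ξ ω ∂P) :
    ∀ᵐ ω ∂P, BddAbove (Set.range fun j : ℕ =>
      σ (θinv^[j + 1] ω) - ∑ i ∈ Finset.range (j + 1), ξ (θinv^[i + 1] ω)) := by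
  -- measurable representatives
  set σ' : Ω → ℝ := hσint.1.mk σ with hσ'def
  have hσ'meas : Measurable σ' := hσint.1.stronglyMeasurable_mk.measurable
  have hσ'ae : σ =ᵐ[P] σ' := hσint.1.ae_eq_mk
  have hσ'int : Integrable σ' P := hσint.congr hσ'ae
  set ξ' : Ω → ℝ := hξint.1.mk ξ with hξ'def
  have hξ'meas : Measurable ξ' := hξint.1.stronglyMeasurable_mk.measurable
  have hξ'ae : ξ =ᵐ[P] ξ' := hξint.1.ae_eq_mk
  have hξ'int : Integrable ξ' P := hξint.congr hξ'ae
  -- θinv is measure preserving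
  have hθmp : MeasurePreserving θ P P := hθ.toMeasurePreserving
  have hT : MeasurePreserving θinv P P := by
    refine ⟨hθinv, ?_⟩
    refine Measure.ext fun s hs => ?_
    rw [Measure.map_apply hθinv hs]
    have hpre : θ ⁻¹' (θinv ⁻¹' s) = s := by
      ext ω; simp [hli ω]
    calc P (θinv ⁻¹' s) = P (θ ⁻¹' (θinv ⁻¹' s)) :=
          (hθmp.measure_preimage (hθinv hs).nullMeasurableSet).symm
      _ = P s := by rw [hpre]
  -- θinv is a measurable embedding (via a measurable equiv)
  have hemb : MeasurableEmbedding θinv := by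
    exact MeasurableEquiv.measurableEmbedding
      { toFun := θinv
        invFun := θ
        left_inv := hri
        right_inv := hli
        measurable_toFun := hθinv
        measurable_invFun := hθmp.measurable }
  -- ergodicity transfer to θinv
  have herg : ∀ s : Set Ω, MeasurableSet s → θinv ⁻¹' s = s → P s = 0 ∨ P s = 1 := by
    intro s hs hsinv
    have hθs : θ ⁻¹' s = s := by
      conv_lhs => rw [← hsinv]
      ext ω; simp [hli ω]
    rcases hθ.toPreErgodic.ae_empty_or_univ hs hθs with h | h
    · exact Or.inl (ae_eq_empty.mp h)
    · right
      calc P s = P Set.univ := measure_congr h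
        _ = 1 := measure_univ
  -- constant
  set c : ℝ := (∫ ω, ξ ω ∂P) / 2 with hcdef
  have hc : 0 < c := by positivity
  -- part B: maximal ergodic applied to f = c - ξ'
  have hfint : Integrable (fun ω => c - ξ' ω) P := (integrable_const c).sub hξ'int
  have hfmeas : Measurable (fun ω => c - ξ' ω) := measurable_const.sub hξ'meas
  have hfover : ∫ ω, (c - ξ' ω) ∂P < 0 := by
    rw [integral_sub (integrable_const c) hξ'int]
    rw [integral_congr_ae hξ'ae.symm]
    rw [integral_const]
    simp only [probReal_univ, one_smul]
    rw [hcdef]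
    linarith
  have hB : ∀ᵐ ω ∂P, BddAbove (Set.range fun n : ℕ =>
      ∑ i ∈ Finset.range n, (c - ξ' (θinv^[i] ω))) :=
    aux_ae_bddAbove_sums P θinv hθinv hT hemb herg _ hfmeas hfint hfover
  -- part A: Borel–Cantelli for σ
  have hsummeas : ∀ n : ℕ, MeasurableSet {ω | c * (n + 1) ≤ σ' ω} := fun n =>
    measurableSet_le measurable_const hσ'meas
  have hAsum : (∑' n : ℕ, P ((θinv^[n + 1]) ⁻¹' {ω | c * (n + 1) ≤ σ' ω})) ≠ ∞ := by
    have heq : ∀ n : ℕ, P ((θinv^[n + 1]) ⁻¹' {ω | c * (n + 1) ≤ σ' ω})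
        = P {ω | c * (n + 1) ≤ σ' ω} := fun n =>
      (hT.iterate (n + 1)).measure_preimage (hsummeas n).nullMeasurableSet
    simp_rw [heq]
    exact aux_tsum_meas_ne_top P hσ'meas hσ'int hc
  have hA : ∀ᵐ ω ∂P, ∀ᶠ n : ℕ in atTop,
      ω ∉ (θinv^[n + 1]) ⁻¹' {ω' | c * (n + 1) ≤ σ' ω'} :=
    ae_eventually_notMem hAsum
  -- a.e. equality along all iterates
  have hae : ∀ᵐ ω ∂P, ∀ n : ℕ,
      σ (θinv^[n] ω) = σ' (θinv^[n] ω) ∧ ξ (θinv^[n] ω) = ξ' (θinv^[n] ω) := by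
    rw [ae_all_iff]
    intro n
    have h1 : (fun ω => σ (θinv^[n] ω)) =ᵐ[P] fun ω => σ' (θinv^[n] ω) :=
      (hT.iterate n).quasiMeasurePreserving.ae_eq_comp hσ'ae
    have h2 : (fun ω => ξ (θinv^[n] ω)) =ᵐ[P] fun ω => ξ' (θinv^[n] ω) :=
      (hT.iterate n).quasiMeasurePreserving.ae_eq_comp hξ'ae
    filter_upwards [h1, h2] with ω hω1 hω2
    exact ⟨hω1, hω2⟩
  -- combine
  filter_upwards [hB, hA, hae] with ω hBω hAω haeω
  obtain ⟨K, hK⟩ := hBω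
  obtain ⟨J, hJ⟩ := eventually_atTop.mp hAω
  have hKle : ∀ n : ℕ, ∑ i ∈ Finset.range n, (c - ξ' (θinv^[i] ω)) ≤ K := fun n =>
    hK ⟨n, rfl⟩
  refine aux_bddAbove_range_of_eventually (C := K + ξ' ω) (J := J) fun j hj => ?_
  -- rewrite σ, ξ with σ', ξ'
  have hgoal : σ (θinv^[j + 1] ω) - ∑ i ∈ Finset.range (j + 1), ξ (θinv^[i + 1] ω)
      = σ' (θinv^[j + 1] ω) - ∑ i ∈ Finset.range (j + 1), ξ' (θinv^[i + 1] ω) := by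
    rw [(haeω (j + 1)).1]
    congr 1
    exact Finset.sum_congr rfl fun i _ => (haeω (i + 1)).2
  rw [hgoal]
  -- bound σ' term
  have hσbound : σ' (θinv^[j + 1] ω) < c * (j + 1) := by
    have := hJ j hj
    simp only [Set.mem_preimage, Set.mem_setOf_eq, not_le] at this
    exact_mod_cast this
  -- bound sum term: relate shifted sum
  have hsum : ∑ i ∈ Finset.range (j + 2), ξ' (θinv^[i] ω)
      = (∑ i ∈ Finset.range (j + 1), ξ' (θinv^[i + 1] ω)) + ξ' ω := by
    rw [Finset.sum_range_succ']
    simp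
  have hsums : ∑ i ∈ Finset.range (j + 2), (c - ξ' (θinv^[i] ω))
      = c * (j + 2) - ∑ i ∈ Finset.range (j + 2), ξ' (θinv^[i] ω) := by
    rw [Finset.sum_sub_distrib, Finset.sum_const, Finset.card_range]
    push_cast
    ring
  have h1 := hKle (j + 2)
  rw [hsums, hsum] at h1
  -- conclude
  have hc1 : c * ((j : ℝ) + 1) ≤ c * ((j : ℝ) + 2) := by nlinarith
  push_cast at hσbound h1 ⊢
  linarith
end

section
/- Let $\theta$ be an ergodic measure-preserving invertible transformation on $(\Omega,\mathcal{F},\mathbb{P})$, and $\sigma \ge 0$, $\xi > 0$ integrable. Then any almost surely finite solution $\tilde{L} \ge 0$ of the equation $\tilde{L}\circ\theta = [\max\{\tilde{L},\sigma\} - \xi]^+$ equals $L = [\sup_{j\ge 1}(\sigma_{-j} - \sum_{i=1}^j \xi_{-i})]^+$ almost surely. In particular the equation has a unique a.s. finite solution. -/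
open MeasureTheory Filter Topology

noncomputable def gfun {Ω : Type*} (θinv : Ω → Ω) (σ ξ : Ω → ℝ) (j : ℕ) (ω : Ω) : ℝ :=
  σ (θinv^[j + 1] ω) - ∑ i ∈ Finset.range (j + 1), ξ (θinv^[i + 1] ω)

lemma Lfun_eq {Ω : Type*} (θinv : Ω → Ω) (σ ξ : Ω → ℝ) (ω : Ω) :
    Lfun θinv σ ξ ω = max (⨆ j, gfun θinv σ ξ j ω) 0 := rfl

lemma aux1 {a b s x : ℝ} (hab : a ≤ b) :
    max (max b s - x) 0 ≤ max (max a s - x) 0 + (b - a) := by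
  have h1 : max b s ≤ max a s + (b - a) := by
    apply max_le
    · linarith [le_max_left a s]
    · linarith [le_max_right a s]
  apply max_le
  · linarith [le_max_left (max a s - x) (0:ℝ)]
  · linarith [le_max_right (max a s - x) (0:ℝ)]

lemma aux2 {a s x b c : ℝ} (hc : 0 < c)
    (h1 : b = max (max a s - x) 0) (h2 : b + c = max (max (a + c) s - x) 0) :
    b = a - x := by
  have e1 : s ≤ max a s := le_max_right a s
  have e2 : max a s - x ≤ max (max a s - x) 0 := le_max_left _ _
  have e3 : (0:ℝ) ≤ max (max a s - x) 0 := le_max_right _ _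
  rcases max_choice (max (a + c) s - x) (0:ℝ) with hm4 | hm4 <;> rw [hm4] at h2
  · rcases max_choice (a + c) s with hm3 | hm3 <;> rw [hm3] at h2 <;> linarith
  · linarith

lemma Lfun_measurable {Ω : Type*} [MeasurableSpace Ω] {θinv : Ω → Ω} {σ ξ : Ω → ℝ}
    (hθinv : Measurable θinv) (hσ : Measurable σ) (hξ : Measurable ξ) :
    Measurable (Lfun θinv σ ξ) := by
  apply Measurable.max _ measurable_const
  apply Measurable.iSup
  intro j
  exact (hσ.comp (hθinv.iterate (j+1))).sub
    (Finset.measurable_sum _ fun i _ => hξ.comp (hθinv.iterate (i+1)))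

lemma erg_eq {Ω : Type*} [MeasurableSpace Ω] (P : Measure Ω) [IsProbabilityMeasure P]
    {θ : Ω → Ω} (hθ : MeasurePreserving θ P P) {h : Ω → ℝ} (hm : AEMeasurable h P)
    (hle : ∀ᵐ ω ∂P, h (θ ω) ≤ h ω) : (fun ω => h (θ ω)) =ᵐ[P] h := by
  set v : Ω → ℝ := fun ω => Real.arctan (h ω) with hv
  have hvm : AEMeasurable v P := Real.continuous_arctan.measurable.comp_aemeasurable hm
  have hbound : ∀ y : ℝ, ‖Real.arctan y‖ ≤ Real.pi / 2 := fun y => by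
    rw [Real.norm_eq_abs, abs_le]
    exact ⟨(Real.neg_pi_div_two_lt_arctan y).le, (Real.arctan_lt_pi_div_two y).le⟩
  have hvi : Integrable v P :=
    (integrable_const (Real.pi / 2)).mono' hvm.aestronglyMeasurable
      (Eventually.of_forall fun ω => hbound _)
  have hvθm : AEMeasurable (fun ω => v (θ ω)) P := hvm.comp_quasiMeasurePreserving hθ.quasiMeasurePreserving
  have hvθi : Integrable (fun ω => v (θ ω)) P :=
    (integrable_const (Real.pi / 2)).mono' hvθm.aestronglyMeasurable
      (Eventually.of_forall fun ω => hbound _)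
  have hmap : ∫ ω, v (θ ω) ∂P = ∫ ω, v ω ∂P := by
    have := integral_map (μ := P) hθ.measurable.aemeasurable
      (f := v) (hθ.map_eq.symm ▸ hvm.aestronglyMeasurable)
    rw [hθ.map_eq] at this
    exact this.symm
  have hnn : 0 ≤ᵐ[P] fun ω => v ω - v (θ ω) := by
    filter_upwards [hle] with ω hω
    have := Real.arctan_strictMono.monotone hω
    simp only [Pi.zero_apply]
    simp only [hv]
    linarith
  have hzero : ∫ ω, (v ω - v (θ ω)) ∂P = 0 := by
    rw [integral_sub hvi hvθi, hmap, sub_self]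
  have heq := (integral_eq_zero_iff_of_nonneg_ae hnn (hvi.sub hvθi)).mp hzero
  filter_upwards [heq] with ω hω
  simp only [Pi.zero_apply, hv] at hω
  exact Real.arctan_injective (by linarith)

lemma key1 {Ω : Type*} {θ θinv : Ω → Ω} (hri : Function.RightInverse θinv θ)
    {σ ξ Ltilde : Ω → ℝ} {ω : Ω}
    (hrec0 : ∀ n : ℕ, Ltilde (θ (θinv^[n] ω)) =
      max (max (Ltilde (θinv^[n] ω)) (σ (θinv^[n] ω)) - ξ (θinv^[n] ω)) 0)
    (j : ℕ) : gfun θinv σ ξ j ω ≤ Ltilde ω := by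
  have hrec : ∀ n : ℕ, Ltilde (θinv^[n] ω) =
      max (max (Ltilde (θinv^[n+1] ω)) (σ (θinv^[n+1] ω)) - ξ (θinv^[n+1] ω)) 0 := by
    intro n
    have h2 := hrec0 (n + 1)
    rwa [show θ (θinv^[n+1] ω) = θinv^[n] ω from by
      rw [Function.iterate_succ_apply']; exact hri _] at h2
  have hchain : ∀ k : ℕ,
      Ltilde (θinv^[k] ω) - ∑ i ∈ Finset.range k, ξ (θinv^[i+1] ω) ≤ Ltilde ω := by
    intro k
    induction k with
    | zero => simp
    | succ m ih =>
      have h3 := hrec m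
      have h4 : Ltilde (θinv^[m+1] ω) - ξ (θinv^[m+1] ω) ≤ Ltilde (θinv^[m] ω) := by
        rw [h3]
        exact le_trans (sub_le_sub_right (le_max_left _ _) _) (le_max_left _ _)
      rw [Finset.sum_range_succ]
      linarith
  have h5 := hrec j
  have h6 : σ (θinv^[j+1] ω) - ξ (θinv^[j+1] ω) ≤ Ltilde (θinv^[j] ω) := by
    rw [h5]
    exact le_trans (sub_le_sub_right (le_max_right _ _) _) (le_max_left _ _)
  have h7 := hchain j
  show σ (θinv^[j+1] ω) - ∑ i ∈ Finset.range (j+1), ξ (θinv^[i+1] ω) ≤ Ltilde ω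
  rw [Finset.sum_range_succ]
  linarith

lemma key2 {Ω : Type*} {θ θinv : Ω → Ω} (hli : Function.LeftInverse θinv θ)
    {σ ξ : Ω → ℝ} {ω : Ω} (hσ0 : 0 ≤ σ ω)
    (hBdd : BddAbove (Set.range fun j => gfun θinv σ ξ j ω)) :
    Lfun θinv σ ξ (θ ω) = max (max (Lfun θinv σ ξ ω) (σ ω) - ξ ω) 0 := by
  have hS1 : ∀ n : ℕ, θinv^[n + 1] (θ ω) = θinv^[n] ω := fun n => by
    rw [Function.iterate_succ_apply, hli ω]
  have hgθ : ∀ j, gfun θinv σ ξ j (θ ω) =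
      σ (θinv^[j] ω) - ∑ i ∈ Finset.range (j + 1), ξ (θinv^[i] ω) := by
    intro j
    unfold gfun
    rw [hS1 j]
    congr 1
    exact Finset.sum_congr rfl fun i _ => by rw [hS1 i]
  have hgθ0 : gfun θinv σ ξ 0 (θ ω) = σ ω - ξ ω := by
    rw [hgθ 0]; simp
  have hgθs : ∀ k, gfun θinv σ ξ (k + 1) (θ ω) = gfun θinv σ ξ k ω - ξ ω := by
    intro k
    rw [hgθ (k + 1), Finset.sum_range_succ']
    unfold gfun
    simp only [Function.iterate_zero_apply]
    ring
  obtain ⟨cb, hcb⟩ := hBdd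
  have hBddθ : BddAbove (Set.range fun j => gfun θinv σ ξ j (θ ω)) := by
    refine ⟨max (σ ω - ξ ω) (cb - ξ ω), ?_⟩
    rintro x ⟨j, rfl⟩
    simp only []
    cases j with
    | zero => rw [hgθ0]; exact le_max_left _ _
    | succ k =>
      rw [hgθs k]
      exact le_trans (sub_le_sub_right (hcb ⟨k, rfl⟩) _) (le_max_right _ _)
  have hBdd' : BddAbove (Set.range fun j => gfun θinv σ ξ j ω) := ⟨cb, hcb⟩
  have hsup : (⨆ j, gfun θinv σ ξ j (θ ω)) = max (σ ω) (⨆ j, gfun θinv σ ξ j ω) - ξ ω := by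
    apply le_antisymm
    · refine ciSup_le fun j => ?_
      cases j with
      | zero => rw [hgθ0]; exact sub_le_sub_right (le_max_left _ _) _
      | succ k =>
        rw [hgθs k]
        exact sub_le_sub_right (le_trans (le_ciSup hBdd' k) (le_max_right _ _)) _
    · rw [sub_le_iff_le_add, max_le_iff]
      constructor
      · have h1 := le_ciSup hBddθ 0
        rw [hgθ0] at h1; linarith
      · have h2 : (⨆ j, gfun θinv σ ξ j ω) ≤ (⨆ j, gfun θinv σ ξ j (θ ω)) + ξ ω := by
          refine ciSup_le fun k => ?_
          have h3 := le_ciSup hBddθ (k + 1)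
          rw [hgθs k] at h3
          linarith
        linarith
  rw [Lfun_eq, Lfun_eq, hsup, max_assoc, max_eq_right hσ0, max_comm (σ ω) _]

/-- Any a.s. finite (real-valued) nonnegative solution of
`L̃ ∘ θ = [max{L̃, σ} - ξ]⁺` equals `L` almost surely: the equation has a
unique a.s. finite solution. -/
theorem stmt8 {Ω : Type*} [MeasurableSpace Ω] (P : Measure Ω) [IsProbabilityMeasure P]
    (θ θinv : Ω → Ω) (hθ : Ergodic θ P) (hθinv : Measurable θinv)
    (hli : Function.LeftInverse θinv θ) (hri : Function.RightInverse θinv θ)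
    (σ ξ : Ω → ℝ) (hσint : Integrable σ P) (hξint : Integrable ξ P)
    (hσ0 : ∀ ω, 0 ≤ σ ω) (hξ0 : ∀ ω, 0 < ξ ω)
    (Ltilde : Ω → ℝ) (hLmeas : Measurable Ltilde) (hLpos : ∀ ω, 0 ≤ Ltilde ω)
    (hLeq : ∀ᵐ ω ∂P, Ltilde (θ ω) = max (max (Ltilde ω) (σ ω) - ξ ω) 0) :
    ∀ᵐ ω ∂P, Ltilde ω = Lfun θinv σ ξ ω := by
  classical
  have hθm : Measurable θ := hθ.toMeasurePreserving.measurable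
  have hSmp : MeasurePreserving θinv P P := by
    refine ⟨hθinv, ?_⟩
    conv_lhs => rw [← hθ.toMeasurePreserving.map_eq]
    rw [Measure.map_map hθinv hθm, show θinv ∘ θ = id from funext hli, Measure.map_id]
  have hiter_ae : ∀ (A : Set Ω), MeasurableSet A → P A = 0 →
      ∀ᵐ ω ∂P, ∀ n : ℕ, θinv^[n] ω ∉ A := by
    intro A hAm hA0
    rw [ae_all_iff]
    intro n
    have h0 : P (θinv^[n] ⁻¹' A) = 0 := by
      rw [(hSmp.iterate n).measure_preimage hAm.nullMeasurableSet, hA0]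
    exact measure_eq_zero_iff_ae_notMem.mp h0
  -- the null set where the recursion for Ltilde fails
  set Nset := toMeasurable P {ω | ¬ (Ltilde (θ ω) = max (max (Ltilde ω) (σ ω) - ξ ω) 0)}
    with hNdef
  have hNm : MeasurableSet Nset := measurableSet_toMeasurable _ _
  have hNnull : P Nset = 0 := by
    rw [hNdef, measure_toMeasurable]; exact ae_iff.mp hLeq
  have hNrec : ∀ x, x ∉ Nset → Ltilde (θ x) = max (max (Ltilde x) (σ x) - ξ x) 0 := by
    intro x hx
    by_contra hcon
    exact hx (subset_toMeasurable _ _ hcon)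
  have hGrec : ∀ᵐ ω ∂P, ∀ n : ℕ, θinv^[n] ω ∉ Nset := hiter_ae Nset hNm hNnull
  -- measurable modifications of σ and ξ
  obtain ⟨σ', hσ'm, hσ'eq⟩ := hσint.aemeasurable
  obtain ⟨ξ', hξ'm, hξ'eq⟩ := hξint.aemeasurable
  set Mset := toMeasurable P ({ω | σ ω ≠ σ' ω} ∪ {ω | ξ ω ≠ ξ' ω}) with hMdef
  have hMm : MeasurableSet Mset := measurableSet_toMeasurable _ _
  have hMnull : P Mset = 0 := by
    rw [hMdef, measure_toMeasurable]
    exact measure_union_null (ae_iff.mp hσ'eq) (ae_iff.mp hξ'eq)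
  have hL'ae : Lfun θinv σ ξ =ᵐ[P] Lfun θinv σ' ξ' := by
    filter_upwards [hiter_ae Mset hMm hMnull] with ω hω
    have hnot : ∀ n : ℕ, σ (θinv^[n] ω) = σ' (θinv^[n] ω) ∧ ξ (θinv^[n] ω) = ξ' (θinv^[n] ω) := by
      intro n
      have h2 : θinv^[n] ω ∉ {ω | σ ω ≠ σ' ω} ∪ {ω | ξ ω ≠ ξ' ω} :=
        fun hcon => hω n (subset_toMeasurable _ _ hcon)
      constructor
      · by_contra hcon; exact h2 (Set.mem_union_left _ hcon)
      · by_contra hcon; exact h2 (Set.mem_union_right _ hcon)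
    have hgg : ∀ j, gfun θinv σ ξ j ω = gfun θinv σ' ξ' j ω := by
      intro j
      unfold gfun
      rw [(hnot (j+1)).1]
      congr 1
      exact Finset.sum_congr rfl fun i _ => (hnot (i+1)).2
    rw [Lfun_eq, Lfun_eq]
    simp only [hgg]
  have hLfunAE : AEMeasurable (Lfun θinv σ ξ) P :=
    ⟨Lfun θinv σ' ξ', Lfun_measurable hθinv hσ'm hξ'm, hL'ae⟩
  -- minimality facts
  have hBddae : ∀ᵐ ω ∂P, BddAbove (Set.range fun j => gfun θinv σ ξ j ω) := by
    filter_upwards [hGrec] with ω hω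
    exact ⟨Ltilde ω, by rintro x ⟨j, rfl⟩; exact key1 hri (fun n => hNrec _ (hω n)) j⟩
  have hLle : ∀ᵐ ω ∂P, Lfun θinv σ ξ ω ≤ Ltilde ω := by
    filter_upwards [hGrec] with ω hω
    rw [Lfun_eq]
    exact max_le (ciSup_le fun j => key1 hri (fun n => hNrec _ (hω n)) j) (hLpos ω)
  have hLrec : ∀ᵐ ω ∂P, Lfun θinv σ ξ (θ ω) = max (max (Lfun θinv σ ξ ω) (σ ω) - ξ ω) 0 := by
    filter_upwards [hBddae] with ω hω
    exact key2 hli (hσ0 ω) hω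
  -- the difference is invariant, hence a.e. constant
  set D : Ω → ℝ := fun ω => Ltilde ω - Lfun θinv σ ξ ω with hDdef
  have hDae : AEMeasurable D P := hLmeas.aemeasurable.sub hLfunAE
  have hDdec : ∀ᵐ ω ∂P, D (θ ω) ≤ D ω := by
    filter_upwards [hGrec, hLrec, hLle] with ω h0 h1 h2
    have hrec0 : Ltilde (θ ω) = max (max (Ltilde ω) (σ ω) - ξ ω) 0 :=
      hNrec ω (by have := h0 0; rwa [Function.iterate_zero_apply] at this)
    show Ltilde (θ ω) - Lfun θinv σ ξ (θ ω) ≤ Ltilde ω - Lfun θinv σ ξ ω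
    rw [hrec0, h1]
    have h3 := aux1 (s := σ ω) (x := ξ ω) h2
    linarith
  have hDinv : (fun ω => D (θ ω)) =ᵐ[P] D := erg_eq P hθ.toMeasurePreserving hDae hDdec
  obtain ⟨c, hc⟩ := hθ.ae_eq_const_of_ae_eq_comp₀ hDae.nullMeasurable hDinv
  have hPne : (P : Measure Ω) ≠ 0 := IsProbabilityMeasure.ne_zero P
  haveI : (ae P).NeBot := ae_neBot.mpr hPne
  have hDnn : ∀ᵐ ω ∂P, 0 ≤ D ω := by
    filter_upwards [hLle] with ω h
    show 0 ≤ Ltilde ω - Lfun θinv σ ξ ω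
    linarith
  have hc0 : 0 ≤ c := by
    obtain ⟨ω, h1, h2⟩ := (hDnn.and hc).exists
    rw [h2] at h1
    exact h1
  rcases eq_or_lt_of_le hc0 with hc' | hc'
  · filter_upwards [hc] with ω hω
    have h1 : Ltilde ω - Lfun θinv σ ξ ω = c := hω
    linarith [hc'.symm ▸ h1]
  · exfalso
    have hcθ : ∀ᵐ ω ∂P, D (θ ω) = c := hDinv.trans hc
    have hstep : ∀ᵐ ω ∂P, Lfun θinv σ ξ (θ ω) = Lfun θinv σ ξ ω - ξ ω := by
      filter_upwards [hGrec, hLrec, hc, hcθ] with ω h0 h1 h2 h3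
      have hrec0 : Ltilde (θ ω) = max (max (Ltilde ω) (σ ω) - ξ ω) 0 :=
        hNrec ω (by have := h0 0; rwa [Function.iterate_zero_apply] at this)
      have e1 : Ltilde ω - Lfun θinv σ ξ ω = c := h2
      have e2 : Ltilde (θ ω) - Lfun θinv σ ξ (θ ω) = c := h3
      have e3 : Lfun θinv σ ξ (θ ω) + c = max (max (Lfun θinv σ ξ ω + c) (σ ω) - ξ ω) 0 := by
        have e4 : Ltilde ω = Lfun θinv σ ξ ω + c := by linarith
        have e5 : Ltilde (θ ω) = Lfun θinv σ ξ (θ ω) + c := by linarith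
        rw [e4, e5] at hrec0
        exact hrec0
      exact aux2 hc' h1 e3
    have hmono : ∀ᵐ ω ∂P, Lfun θinv σ ξ (θ ω) ≤ Lfun θinv σ ξ ω := by
      filter_upwards [hstep] with ω h
      have := (hξ0 ω).le
      linarith
    have hfix := erg_eq P hθ.toMeasurePreserving hLfunAE hmono
    have hbad : ∀ᵐ ω ∂P, False := by
      filter_upwards [hstep, hfix] with ω h1 h2
      have h3 : Lfun θinv σ ξ (θ ω) = Lfun θinv σ ξ ω := h2
      have := hξ0 ω
      linarith
    obtain ⟨_, hfalse⟩ := hbad.exists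
    exact hfalse
end

section
/- Let $\mu$ be any finite counting measure on $[0,\infty)$ that solves $\mu\circ\theta = \tau_\xi(\mu + \delta_\sigma)$ a.s. in the ergodic Palm setting. Then its largest atom $Z(\mu)$ (with $Z(\mathbf{0})=0$) satisfies $Z(\mu)\circ\theta = [\max\{Z(\mu),\sigma\} - \xi]^+$ almost surely, and hence $Z(\mu) = L$ a.s., where $L = [\sup_{j\ge 1}(\sigma_{-j}-\sum_{i=1}^j \xi_{-i})]^+$. -/
open MeasureTheory Filter Topology
open scoped ENNReal

/-- The shift-and-truncate operator `τ_y`. -/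
noncomputable def tau (y : ℝ) (μ : Measure ℝ) : Measure ℝ :=
  (μ.restrict (Set.Ioi y)).map (fun t => t - y)

/-- The largest atom of a finite counting measure represented by its (finite) set of
atoms; by the junk-value convention `sSup ∅ = 0` in `ℝ`, we get `Z(𝟎) = 0`. -/
noncomputable def Zfin (s : Finset ℝ) : ℝ := sSup (↑s : Set ℝ)

namespace Stmt10Aux


lemma sum_dirac_apply (A : Finset ℝ) {E : Set ℝ} (hE : MeasurableSet E) :
    (∑ x ∈ A, (Measure.dirac x : Measure ℝ)) E = ∑ x ∈ A, E.indicator (1 : ℝ → ℝ≥0∞) x := by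
  rw [Measure.finset_sum_apply]
  exact Finset.sum_congr rfl fun x _ => Measure.dirac_apply' x hE

lemma one_le_sum_dirac (A : Finset ℝ) {a : ℝ} (ha : a ∈ A) {E : Set ℝ}
    (hE : MeasurableSet E) (haE : a ∈ E) :
    1 ≤ (∑ x ∈ A, (Measure.dirac x : Measure ℝ)) E := by
  rw [sum_dirac_apply A hE]
  calc (1 : ℝ≥0∞) = E.indicator (1 : ℝ → ℝ≥0∞) a := by simp [Set.indicator_of_mem haE]
    _ ≤ _ := Finset.single_le_sum (fun i _ => zero_le) ha

lemma sum_dirac_eq_zero (A : Finset ℝ) {E : Set ℝ} (hE : MeasurableSet E)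
    (h : ∀ x ∈ A, x ∉ E) :
    (∑ x ∈ A, (Measure.dirac x : Measure ℝ)) E = 0 := by
  rw [sum_dirac_apply A hE]
  exact Finset.sum_eq_zero fun x hx => Set.indicator_of_notMem (h x hx) _

lemma tau_apply (y : ℝ) (μ : Measure ℝ) {E : Set ℝ} (hE : MeasurableSet E) :
    tau y μ E = μ ((fun t => t - y) ⁻¹' E ∩ Set.Ioi y) := by
  rw [tau, Measure.map_apply (measurable_sub_const y) hE,
    Measure.restrict_apply ((measurable_sub_const y) hE)]

lemma pre_singleton (y a : ℝ) : (fun t : ℝ => t - y) ⁻¹' {a} = {a + y} := by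
  ext t; simp [sub_eq_iff_eq_add]

lemma pre_Ioi (y r : ℝ) : (fun t : ℝ => t - y) ⁻¹' (Set.Ioi r) = Set.Ioi (r + y) := by
  ext t; simp [Set.mem_Ioi, lt_sub_iff_add_lt]

lemma le_Zfin {A : Finset ℝ} {a : ℝ} (ha : a ∈ A) : a ≤ Zfin A :=
  le_csSup A.finite_toSet.bddAbove ha

lemma Zfin_mem {A : Finset ℝ} (h : A.Nonempty) : Zfin A ∈ A := h.csSup_mem

lemma Zfin_nonneg {A : Finset ℝ} (h : ∀ a ∈ A, 0 ≤ a) : 0 ≤ Zfin A := by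
  rcases A.eq_empty_or_nonempty with rfl | hA
  · simp [Zfin, Real.sSup_empty]
  · exact le_trans (h _ (Zfin_mem hA)) le_rfl

lemma det (A B : Finset ℝ) (c d : ℝ) (hc : 0 ≤ c) (hd : 0 < d)
    (hA0 : ∀ a ∈ A, 0 ≤ a)
    (h : (∑ x ∈ A, (Measure.dirac x : Measure ℝ)) =
      tau d ((∑ x ∈ B, (Measure.dirac x : Measure ℝ)) + Measure.dirac c)) :
    Zfin A = max (max (Zfin B) c - d) 0 := by
  set μ' : Measure ℝ := (∑ x ∈ B, (Measure.dirac x : Measure ℝ)) + Measure.dirac c with hμ'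
  set M : ℝ := max (Zfin B) c with hM
  have hcM : c ≤ M := le_max_right _ _
  have hM0 : 0 ≤ M := le_trans hc hcM
  have hione : (1 : ℝ≥0∞) ≤ μ' {M} := by
    by_cases hMc : M = c
    · have h1 : (1 : ℝ≥0∞) ≤ Measure.dirac c {M} := by
        rw [Measure.dirac_apply' _ (measurableSet_singleton M)]
        simp [Set.indicator_of_mem, hMc]
      calc (1 : ℝ≥0∞) ≤ Measure.dirac c {M} := h1
        _ ≤ μ' {M} := by rw [hμ', Measure.add_apply]; exact le_add_self
    · have hBne : B.Nonempty := by
        by_contra hB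
        rw [Finset.not_nonempty_iff_eq_empty] at hB
        apply hMc
        rw [hM, hB]
        simp [Zfin, Real.sSup_empty, max_eq_right hc]
      have hMB : M = Zfin B := by
        rcases max_choice (Zfin B) c with h' | h'
        · rw [hM, h']
        · exact absurd (hM.trans h') hMc
      have h1 : (1 : ℝ≥0∞) ≤ (∑ x ∈ B, (Measure.dirac x : Measure ℝ)) {M} :=
        one_le_sum_dirac B (hMB ▸ Zfin_mem hBne) (measurableSet_singleton M) rfl
      calc (1 : ℝ≥0∞) ≤ _ := h1
        _ ≤ μ' {M} := by rw [hμ', Measure.add_apply]; exact le_self_add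
  have hIoiM : μ' (Set.Ioi M) = 0 := by
    rw [hμ', Measure.add_apply,
      sum_dirac_eq_zero B measurableSet_Ioi
        (fun x hx => by
          simp only [Set.mem_Ioi, not_lt]
          exact le_trans (le_Zfin hx) (le_max_left _ _)),
      Measure.dirac_apply' _ measurableSet_Ioi,
      Set.indicator_of_notMem (by simp [Set.mem_Ioi, not_lt.2 hcM] : c ∉ Set.Ioi M)]
    simp
  have hsing : ∀ t : ℝ, (∑ x ∈ A, (Measure.dirac x : Measure ℝ)) {t}
      = μ' ({t + d} ∩ Set.Ioi d) := by
    intro t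
    rw [h, tau_apply d μ' (measurableSet_singleton t), pre_singleton]
  have hIoi : ∀ r : ℝ, (∑ x ∈ A, (Measure.dirac x : Measure ℝ)) (Set.Ioi r)
      = μ' (Set.Ioi (r + d) ∩ Set.Ioi d) := by
    intro r
    rw [h, tau_apply d μ' measurableSet_Ioi, pre_Ioi]
  by_cases hMd : M ≤ d
  · have hA00 : ∀ a ∈ A, a = 0 := by
      intro a ha
      by_contra hne
      have hapos : 0 < a := lt_of_le_of_ne (hA0 a ha) (Ne.symm hne)
      have h1 : (1 : ℝ≥0∞) ≤ (∑ x ∈ A, (Measure.dirac x : Measure ℝ)) {a} :=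
        one_le_sum_dirac A ha (measurableSet_singleton a) rfl
      have h2 : (∑ x ∈ A, (Measure.dirac x : Measure ℝ)) {a} = 0 := by
        rw [hsing a]
        refine measure_mono_null ?_ hIoiM
        rintro t ⟨ht1, _⟩
        simp only [Set.mem_singleton_iff] at ht1
        subst ht1
        simp only [Set.mem_Ioi]
        linarith
      rw [h2] at h1
      exact absurd h1 (by simp)
    have hZA : Zfin A = 0 := by
      rcases A.eq_empty_or_nonempty with rfl | hAne
      · simp [Zfin, Real.sSup_empty]
      · exact hA00 _ (Zfin_mem hAne)
    rw [hZA]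
    symm
    apply max_eq_right
    linarith
  · push_neg at hMd
    have hmem : M - d ∈ A := by
      by_contra hnm
      have h0 : (∑ x ∈ A, (Measure.dirac x : Measure ℝ)) {M - d} = 0 :=
        sum_dirac_eq_zero A (measurableSet_singleton _)
          (fun x hx hxe => by
            simp only [Set.mem_singleton_iff] at hxe
            exact hnm (hxe ▸ hx))
      rw [hsing] at h0
      have hMdd : M - d + d = M := by ring
      have hset : ({M - d + d} : Set ℝ) ∩ Set.Ioi d = {M} := by
        rw [hMdd]
        exact Set.inter_eq_left.2 (Set.singleton_subset_iff.2 hMd)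
      rw [hset] at h0
      rw [h0] at hione
      exact absurd hione (by simp)
    have hub : ∀ a ∈ (A : Set ℝ), a ≤ M - d := by
      intro a ha
      by_contra hlt
      push_neg at hlt
      have h1 : (1 : ℝ≥0∞) ≤ (∑ x ∈ A, (Measure.dirac x : Measure ℝ)) (Set.Ioi (M - d)) :=
        one_le_sum_dirac A ha measurableSet_Ioi hlt
      have h2 : (∑ x ∈ A, (Measure.dirac x : Measure ℝ)) (Set.Ioi (M - d)) = 0 := by
        rw [hIoi]
        have hMdd : M - d + d = M := by ring
        rw [hMdd, Set.inter_eq_left.2 (Set.Ioi_subset_Ioi hMd.le)]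
        exact hIoiM
      rw [h2] at h1
      exact absurd h1 (by simp)
    have hZA : Zfin A = M - d :=
      le_antisymm (csSup_le (by exact_mod_cast Finset.coe_nonempty.2 ⟨_, hmem⟩) hub)
        (le_Zfin hmem)
    rw [hZA]
    symm
    exact max_eq_left (by linarith)



/-- Sub-invariant a.e.-measurable functions are a.e. invariant. -/
lemma ae_eq_of_ae_le_comp {Ω : Type*} [MeasurableSpace Ω] {P : Measure Ω}
    [IsProbabilityMeasure P] {θ : Ω → Ω} (hθ : MeasurePreserving θ P P)
    {f : Ω → ℝ} (hf : AEMeasurable f P)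
    (h : ∀ᵐ ω ∂P, f (θ ω) ≤ f ω) : ∀ᵐ ω ∂P, f (θ ω) = f ω := by
  obtain ⟨g, hgm, hfg⟩ := hf
  have hfgθ : ∀ᵐ ω ∂P, f (θ ω) = g (θ ω) :=
    hθ.quasiMeasurePreserving.ae (p := fun x => f x = g x) hfg
  have hgle : ∀ᵐ ω ∂P, g (θ ω) ≤ g ω := by
    filter_upwards [h, hfg, hfgθ] with ω h1 h2 h3
    rw [← h3, ← h2]; exact h1
  suffices hS : ∀ᵐ ω ∂P, g (θ ω) = g ω by
    filter_upwards [hS, hfg, hfgθ] with ω h1 h2 h3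
    rw [h3, h1, h2]
  have key : ∀ q : ℚ, ∀ᵐ ω ∂P, g (θ ω) ≤ (q : ℝ) → g ω ≤ (q : ℝ) := by
    intro q
    set Aq : Set Ω := {ω | g ω ≤ (q : ℝ)} with hAq
    have hA : MeasurableSet Aq := hgm measurableSet_Iic
    have hApre : MeasurableSet (θ ⁻¹' Aq) := hθ.measurable hA
    have hpre : P (θ ⁻¹' Aq) = P Aq := hθ.measure_preimage hA.nullMeasurableSet
    have h1 : P (Aq \ θ ⁻¹' Aq) = 0 := by
      refine measure_mono_null ?_ (ae_iff.1 hgle)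
      rintro ω ⟨h2, h3⟩
      simp only [Set.mem_setOf_eq, Set.mem_preimage, hAq] at h2 h3 ⊢
      exact fun hle => h3 (hle.trans h2)
    have e2 := measure_inter_add_diff (μ := P) Aq hApre
    rw [h1, add_zero] at e2
    have e1 := measure_inter_add_diff (μ := P) (θ ⁻¹' Aq) hA
    rw [Set.inter_comm, e2, hpre] at e1
    have h2 : P (θ ⁻¹' Aq \ Aq) = 0 := by
      have hfin : P Aq ≠ ∞ := measure_ne_top _ _
      exact (ENNReal.add_right_inj hfin).1 (by rw [add_zero]; exact e1)
    rw [ae_iff]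
    refine measure_mono_null ?_ h2
    intro ω hω
    simp only [Set.mem_setOf_eq, Classical.not_imp] at hω
    exact ⟨hω.1, hω.2⟩
  have hkey : ∀ᵐ ω ∂P, ∀ q : ℚ, g (θ ω) ≤ (q : ℝ) → g ω ≤ (q : ℝ) := ae_all_iff.2 key
  filter_upwards [hkey, hgle] with ω h1 h2
  refine le_antisymm h2 ?_
  by_contra hlt
  push_neg at hlt
  obtain ⟨q, hq1, hq2⟩ := exists_rat_btwn hlt
  exact absurd (h1 q hq1.le) (not_le.2 hq2)

/-- 1-Lipschitz monotonicity of the Loynes map. -/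
lemma f_mono_lip (x y c d : ℝ) (hxy : y ≤ x) :
    max (max y c - d) 0 ≤ max (max x c - d) 0 ∧
      max (max x c - d) 0 - max (max y c - d) 0 ≤ x - y := by
  have hmx : max x c ≤ max y c + (x - y) :=
    max_le (by linarith [le_max_left y c]) (by linarith [le_max_right y c])
  have h0 : max y c - d ≤ max (max y c - d) 0 := le_max_left _ _
  have h00 : (0 : ℝ) ≤ max (max y c - d) 0 := le_max_right _ _
  constructor
  · exact max_le_max (sub_le_sub_right (max_le_max hxy le_rfl) d) le_rfl
  · have h1 : max (max x c - d) 0 ≤ (x - y) + max (max y c - d) 0 :=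
      max_le (by linarith) (by linarith)
    linarith

/-- If adding `e > 0` commutes with the Loynes map, then we are in the linear regime. -/
lemma key_lin (l c d e : ℝ) (hc : 0 ≤ c) (hd : 0 < d) (he : 0 < e)
    (h : max (max (l + e) c - d) 0 = max (max l c - d) 0 + e) :
    max (max l c - d) 0 = l - d ∧ d ≤ l ∧ c ≤ l := by
  have hm : max l c ≤ max (l + e) c := max_le_max (by linarith) le_rfl
  have hm' : max (l + e) c ≤ max l c + e :=
    max_le (by linarith [le_max_left l c]) (by linarith [le_max_right l c])
  have hdm : d ≤ max l c := by
    by_contra hlt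
    push_neg at hlt
    have h2 : max (max (l + e) c - d) 0 < e := max_lt (by linarith) he
    rw [h] at h2
    have h3 : (0 : ℝ) ≤ max (max l c - d) 0 := le_max_right _ _
    linarith
  have hL : max (max l c - d) 0 = max l c - d := max_eq_left (by linarith)
  have hL' : max (max (l + e) c - d) 0 = max (l + e) c - d := max_eq_left (by linarith)
  rw [hL, hL'] at h
  have hmeq : max (l + e) c = max l c + e := by linarith
  have hcl : c ≤ l := by
    by_contra hlt
    push_neg at hlt
    rw [max_eq_right hlt.le] at hmeq
    rcases le_total (l + e) c with h1 | h1
    · rw [max_eq_right h1] at hmeq; linarith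
    · rw [max_eq_left h1] at hmeq; linarith
  rw [max_eq_left hcl] at hdm
  refine ⟨?_, hdm, hcl⟩
  rw [max_eq_left hcl] at hL ⊢
  exact hL



lemma ciSup_nat_succ (h : ℕ → ℝ) (hb : BddAbove (Set.range h)) :
    (⨆ j, h j) = max (h 0) (⨆ j, h (j + 1)) := by
  have hb' : BddAbove (Set.range fun j => h (j + 1)) := by
    obtain ⟨u, hu⟩ := hb
    exact ⟨u, by rintro x ⟨j, rfl⟩; exact hu ⟨j + 1, rfl⟩⟩
  apply le_antisymm
  · refine ciSup_le fun j => ?_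
    cases j with
    | zero => exact le_max_left _ _
    | succ k => exact le_max_of_le_right (le_ciSup hb' k)
  · exact max_le (le_ciSup hb 0) (ciSup_le fun j => le_ciSup hb (j + 1))

lemma ciSup_sub_const (h : ℕ → ℝ) (hb : BddAbove (Set.range h)) (e : ℝ) :
    (⨆ j, (h j - e)) = (⨆ j, h j) - e := by
  have hb' : BddAbove (Set.range fun j => h j - e) := by
    obtain ⟨u, hu⟩ := hb
    exact ⟨u - e, by rintro x ⟨j, rfl⟩; exact sub_le_sub_right (hu ⟨j, rfl⟩) e⟩
  apply le_antisymm
  · exact ciSup_le fun j => sub_le_sub_right (le_ciSup hb j) e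
  · rw [sub_le_iff_le_add]
    refine ciSup_le fun j => ?_
    have := le_ciSup hb' j
    linarith

lemma arith_max (S c d : ℝ) (hc : 0 ≤ c) :
    max (max (c - d) (S - d)) 0 = max (max (max S 0) c - d) 0 := by
  have h1 : max (c - d) (S - d) = max c S - d := by
    rcases le_total c S with h | h
    · rw [max_eq_right h, max_eq_right (by linarith : c - d ≤ S - d)]
    · rw [max_eq_left h, max_eq_left (by linarith : S - d ≤ c - d)]
  have h2 : max (max S 0) c = max c S := by
    rw [max_assoc, max_comm]; congr 1; exact max_eq_right hc
  rw [h1, h2]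


end Stmt10Aux

open Stmt10Aux in
/-- If the finite counting measure with atom set `s ω` solves the stationarity equation
`μ ∘ θ = τ_ξ (μ + δ_σ)` a.s., then its largest atom `Z = Zfin ∘ s` satisfies
`Z ∘ θ = [max{Z,σ} - ξ]⁺` a.s., and hence `Z = L` a.s. -/
theorem stmt10 {Ω : Type*} [MeasurableSpace Ω] (P : Measure Ω) [IsProbabilityMeasure P]
    (θ θinv : Ω → Ω) (hθ : Ergodic θ P) (hθinv : Measurable θinv)
    (hli : Function.LeftInverse θinv θ) (hri : Function.RightInverse θinv θ)
    (σ ξ : Ω → ℝ) (hσint : Integrable σ P) (hξint : Integrable ξ P)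
    (hσ0 : ∀ ω, 0 ≤ σ ω) (hξ0 : ∀ ω, 0 < ξ ω)
    (s : Ω → Finset ℝ) (hs0 : ∀ ω, ∀ a ∈ s ω, 0 ≤ a)
    (hsmeas : Measurable fun ω => Zfin (s ω))
    (heq : ∀ᵐ ω ∂P,
      (∑ x ∈ s (θ ω), (Measure.dirac x : Measure ℝ)) =
        tau (ξ ω) ((∑ x ∈ s ω, (Measure.dirac x : Measure ℝ)) + Measure.dirac (σ ω))) :
    (∀ᵐ ω ∂P, Zfin (s (θ ω)) = max (max (Zfin (s ω)) (σ ω) - ξ ω) 0) ∧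
    (∀ᵐ ω ∂P, Zfin (s ω) = Lfun θinv σ ξ ω) := by
  classical
  set Z : Ω → ℝ := fun ω => Zfin (s ω) with hZdef
  set L : Ω → ℝ := Lfun θinv σ ξ with hLdef0
  have hmp : MeasurePreserving θ P P := hθ.toMeasurePreserving
  have hmpinv : MeasurePreserving θinv P P := by
    refine ⟨hθinv, ?_⟩
    calc P.map θinv = (P.map θ).map θinv := by rw [hmp.map_eq]
      _ = P.map (θinv ∘ θ) := Measure.map_map hθinv hmp.measurable
      _ = P.map id := by congr 1; funext x; exact hli x
      _ = P := Measure.map_id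
  have hq : ∀ j : ℕ, Measure.QuasiMeasurePreserving (θinv^[j]) P P :=
    fun j => (hmpinv.iterate j).quasiMeasurePreserving
  haveI : (ae P).NeBot := ae_neBot.mpr (IsProbabilityMeasure.ne_zero P)
  -- Part 1
  have h1 : ∀ᵐ ω ∂P, Z (θ ω) = max (max (Z ω) (σ ω) - ξ ω) 0 := by
    filter_upwards [heq] with ω hω
    exact det (s (θ ω)) (s ω) (σ ω) (ξ ω) (hσ0 ω) (hξ0 ω) (hs0 (θ ω)) hω
  refine ⟨h1, ?_⟩
  -- iterated recursion along the inverse orbit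
  have hrec : ∀ᵐ ω ∂P, ∀ j : ℕ, Z (θinv^[j] ω)
      = max (max (Z (θinv^[j + 1] ω)) (σ (θinv^[j + 1] ω)) - ξ (θinv^[j + 1] ω)) 0 := by
    rw [ae_all_iff]
    intro j
    filter_upwards [(hq (j + 1)).ae
      (p := fun ω => Z (θ ω) = max (max (Z ω) (σ ω) - ξ ω) 0) h1] with ω hω
    have hiter : θ (θinv^[j + 1] ω) = θinv^[j] ω := by
      rw [Function.iterate_succ_apply']
      exact hri (θinv^[j] ω)
    rw [hiter] at hω
    exact hω
  set g : ℕ → Ω → ℝ := fun j ω =>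
    σ (θinv^[j + 1] ω) - ∑ i ∈ Finset.range (j + 1), ξ (θinv^[i + 1] ω) with hgdef
  have hLdef : ∀ ω, L ω = max (⨆ j, g j ω) 0 := fun ω => rfl
  have hZ0 : ∀ ω, 0 ≤ Z ω := fun ω => Zfin_nonneg (hs0 ω)
  -- the Loynes terms are bounded by Z
  have hbd : ∀ᵐ ω ∂P, ∀ j : ℕ, g j ω ≤ Z ω := by
    filter_upwards [hrec] with ω hω
    have hC : ∀ j : ℕ, max (Z (θinv^[j + 1] ω)) (σ (θinv^[j + 1] ω))
        - ∑ i ∈ Finset.range (j + 1), ξ (θinv^[i + 1] ω) ≤ Z ω := by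
      intro j
      induction j with
      | zero =>
        have h0 := hω 0
        simp only [Function.iterate_zero, id_eq, zero_add] at h0
        rw [h0]
        rw [Finset.sum_range_one]
        exact le_max_left _ _
      | succ k ih =>
        have hk := hω (k + 1)
        have h2 : max (Z (θinv^[k + 1 + 1] ω)) (σ (θinv^[k + 1 + 1] ω)) - ξ (θinv^[k + 1 + 1] ω)
            ≤ Z (θinv^[k + 1] ω) := by rw [hk]; exact le_max_left _ _
        have h3 : Z (θinv^[k + 1] ω) ≤ max (Z (θinv^[k + 1] ω)) (σ (θinv^[k + 1] ω)) :=
          le_max_left _ _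
        rw [Finset.sum_range_succ]
        linarith
    intro j
    have h4 : g j ω ≤ max (Z (θinv^[j + 1] ω)) (σ (θinv^[j + 1] ω))
        - ∑ i ∈ Finset.range (j + 1), ξ (θinv^[i + 1] ω) :=
      sub_le_sub_right (le_max_right _ _) _
    exact h4.trans (hC j)
  have hBdd : ∀ᵐ ω ∂P, BddAbove (Set.range fun j => g j ω) := by
    filter_upwards [hbd] with ω hω
    exact ⟨Z ω, by rintro x ⟨j, rfl⟩; exact hω j⟩
  have hZL : ∀ᵐ ω ∂P, L ω ≤ Z ω := by
    filter_upwards [hbd] with ω hω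
    rw [hLdef]
    exact max_le (ciSup_le hω) (hZ0 ω)
  -- the recursion for L
  have hiterθ : ∀ (ω : Ω) (k : ℕ), θinv^[k + 1] (θ ω) = θinv^[k] ω := by
    intro ω k
    rw [Function.iterate_succ_apply, hli ω]
  have hgθ : ∀ (ω : Ω) (k : ℕ), g k (θ ω)
      = σ (θinv^[k] ω) - ∑ i ∈ Finset.range (k + 1), ξ (θinv^[i] ω) := by
    intro ω k
    simp only [hgdef]
    rw [hiterθ ω k]
    congr 1
    exact Finset.sum_congr rfl fun i _ => by rw [hiterθ ω i]
  have hgθ0 : ∀ ω, g 0 (θ ω) = σ ω - ξ ω := by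
    intro ω
    rw [hgθ ω 0, Finset.sum_range_one]
    simp
  have hgθs : ∀ (ω : Ω) (k : ℕ), g (k + 1) (θ ω) = g k ω - ξ ω := by
    intro ω k
    rw [hgθ ω (k + 1), Finset.sum_range_succ']
    simp only [hgdef, Function.iterate_zero, id_eq]
    ring
  have hLrec : ∀ᵐ ω ∂P, L (θ ω) = max (max (L ω) (σ ω) - ξ ω) 0 := by
    filter_upwards [hBdd] with ω hω
    have hbθ : BddAbove (Set.range fun j => g j (θ ω)) := by
      obtain ⟨u, hu⟩ := hω
      refine ⟨max (σ ω - ξ ω) (u - ξ ω), ?_⟩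
      rintro x ⟨j, rfl⟩
      show g j (θ ω) ≤ _
      cases j with
      | zero => rw [hgθ0]; exact le_max_left _ _
      | succ k =>
        rw [hgθs]
        exact le_max_of_le_right (sub_le_sub_right (hu ⟨k, rfl⟩) _)
    have e1 : (⨆ j, g j (θ ω)) = max (g 0 (θ ω)) (⨆ j, g (j + 1) (θ ω)) :=
      ciSup_nat_succ _ hbθ
    have e2 : (⨆ j, g (j + 1) (θ ω)) = (⨆ j, g j ω) - ξ ω := by
      rw [show (fun j => g (j + 1) (θ ω)) = fun j => g j ω - ξ ω from funext fun j => hgθs ω j]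
      exact ciSup_sub_const _ hω (ξ ω)
    rw [hLdef, hLdef, e1, e2, hgθ0]
    exact arith_max (⨆ j, g j ω) (σ ω) (ξ ω) (hσ0 ω)
  -- measurability of L
  have hσm : AEMeasurable σ P := hσint.aemeasurable
  have hξm : AEMeasurable ξ P := hξint.aemeasurable
  have hgm : ∀ j, AEMeasurable (g j) P := by
    intro j
    apply AEMeasurable.sub
    · exact hσm.comp_quasiMeasurePreserving (hq (j + 1))
    · exact Finset.aemeasurable_fun_sum _ fun i _ =>
        hξm.comp_quasiMeasurePreserving (hq (i + 1))
  set Mn : ℕ → Ω → ℝ := fun n ω =>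
    (Finset.range (n + 1)).sup' Finset.nonempty_range_add_one (fun j => g j ω) with hMndef
  have hMn0 : ∀ ω, Mn 0 ω = g 0 ω := fun ω =>
    le_antisymm
      (Finset.sup'_le _ _ fun j hj => by
        simp only [Finset.mem_range] at hj
        have hj0 : j = 0 := by omega
        subst hj0; exact le_rfl)
      (Finset.le_sup' (fun j => g j ω) (Finset.self_mem_range_succ 0))
  have hMns : ∀ k ω, Mn (k + 1) ω = max (g (k + 1) ω) (Mn k ω) := fun k ω =>
    le_antisymm
      (Finset.sup'_le _ _ fun j hj => by
        simp only [Finset.mem_range] at hj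
        rcases eq_or_lt_of_le (Nat.lt_succ_iff.1 hj) with rfl | hlt
        · exact le_max_left _ _
        · exact le_max_of_le_right (Finset.le_sup' (fun j => g j ω) (Finset.mem_range.2 hlt)))
      (max_le (Finset.le_sup' (fun j => g j ω) (Finset.self_mem_range_succ _))
        (Finset.sup'_le _ _ fun j hj =>
          Finset.le_sup' (fun j => g j ω) (Finset.range_subset_range.2 (by omega) hj)))
  have hMnm : ∀ n, AEMeasurable (fun ω => Mn n ω) P := by
    intro n
    induction n with
    | zero =>
      have he : (fun ω => Mn 0 ω) = g 0 := funext fun ω => hMn0 ω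
      rw [he]; exact hgm 0
    | succ k ih =>
      have he : (fun ω => Mn (k + 1) ω) = fun ω => max (g (k + 1) ω) (Mn k ω) :=
        funext fun ω => hMns k ω
      rw [he]
      exact (hgm (k + 1)).max ih
  have h_tendsto : ∀ᵐ ω ∂P, Tendsto (fun n => max (Mn n ω) 0) atTop (𝓝 (L ω)) := by
    filter_upwards [hBdd] with ω hω
    have hmono : Monotone fun n => Mn n ω := by
      intro a b hab
      exact Finset.sup'_mono _ (Finset.range_subset_range.2 (by omega)) Finset.nonempty_range_add_one
    have hbdM : BddAbove (Set.range fun n => Mn n ω) := by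
      refine ⟨⨆ j, g j ω, ?_⟩
      rintro x ⟨n, rfl⟩
      exact Finset.sup'_le _ _ fun j hj => le_ciSup hω j
    have ht1 : Tendsto (fun n => Mn n ω) atTop (𝓝 (⨆ n, Mn n ω)) :=
      tendsto_atTop_ciSup hmono hbdM
    have h2 : (⨆ n, Mn n ω) = ⨆ j, g j ω := by
      apply le_antisymm
      · exact ciSup_le fun n => Finset.sup'_le _ _ fun j hj => le_ciSup hω j
      · exact ciSup_le fun j =>
          (Finset.le_sup' _ (Finset.self_mem_range_succ j)).trans (le_ciSup hbdM j)
    rw [h2] at ht1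
    rw [hLdef]
    exact ht1.max tendsto_const_nhds
  have hLm : AEStronglyMeasurable L P :=
    aestronglyMeasurable_of_tendsto_ae atTop
      (fun n => ((hMnm n).max aemeasurable_const).aestronglyMeasurable) h_tendsto
  -- the difference is a.e. invariant, hence constant
  set D : Ω → ℝ := fun ω => Z ω - L ω with hDdef
  have hDm : AEMeasurable D P := hsmeas.aemeasurable.sub hLm.aemeasurable
  have hDsub : ∀ᵐ ω ∂P, D (θ ω) ≤ D ω := by
    filter_upwards [h1, hLrec, hZL] with ω e1 e2 e3
    have hf := (f_mono_lip (Z ω) (L ω) (σ ω) (ξ ω) e3).2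
    simp only [hDdef]
    rw [e1, e2]
    linarith
  have hDinv : ∀ᵐ ω ∂P, D (θ ω) = D ω := ae_eq_of_ae_le_comp hmp hDm hDsub
  obtain ⟨cst, hcst⟩ := hθ.ae_eq_const_of_ae_eq_comp_ae hDm.aestronglyMeasurable hDinv
  have hD0 : ∀ᵐ ω ∂P, 0 ≤ D ω := by
    filter_upwards [hZL] with ω e
    simp only [hDdef]
    linarith
  have hcge : 0 ≤ cst := by
    obtain ⟨ω, e1, e2⟩ := (hD0.and hcst).exists
    rw [e2] at e1
    exact e1
  have hcle : cst ≤ 0 := by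
    by_contra hpos
    push_neg at hpos
    have hcstθ : ∀ᵐ ω ∂P, D (θ ω) = cst :=
      hmp.quasiMeasurePreserving.ae (p := fun x => D x = cst) hcst
    have hLdec : ∀ᵐ ω ∂P, L (θ ω) = L ω - ξ ω := by
      filter_upwards [h1, hLrec, hcst, hcstθ] with ω e1 e2 e3 e4
      have hZω : Z ω = L ω + cst := by
        have : D ω = cst := e3
        simp only [hDdef] at this
        linarith
      have hZθ : Z (θ ω) = L (θ ω) + cst := by
        simp only [hDdef] at e4
        linarith
      have hcomm : max (max (L ω + cst) (σ ω) - ξ ω) 0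
          = max (max (L ω) (σ ω) - ξ ω) 0 + cst := by
        rw [← hZω, ← e1, hZθ, e2]
      have hkey := key_lin (L ω) (σ ω) (ξ ω) cst (hσ0 ω) (hξ0 ω) hpos hcomm
      rw [e2, hkey.1]
    have hLle : ∀ᵐ ω ∂P, L (θ ω) ≤ L ω := by
      filter_upwards [hLdec] with ω e
      have := hξ0 ω
      linarith
    have hLinv := ae_eq_of_ae_le_comp hmp hLm.aemeasurable hLle
    have hbad : ∀ᵐ ω ∂P, False := by
      filter_upwards [hLdec, hLinv] with ω e1 e2
      have := hξ0 ω
      rw [e2] at e1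
      linarith
    obtain ⟨ω, hω⟩ := hbad.exists
    exact hω
  have hc0 : cst = 0 := le_antisymm hcle hcge
  filter_upwards [hcst] with ω e
  simp only [hDdef, hc0, Function.const_apply] at e
  linarith
end

section
/- Fix a non-increasing rate function $r:\mathbb{N}^*\to(0,1]$ and $x \ge 0$. For a finite counting measure $\mu$ with atoms $\alpha_1(\mu)\le\cdots\le\alpha_{N(\mu)}(\mu)$, define for $1\le i\le N(\mu)$: $\gamma_i^r(\mu,x) = r(N(\mu)-i+1)\big(x - \sum_{j=1}^{i-1}\alpha_j(\mu)\big(\tfrac{1}{r(N(\mu)-j+1)} - \tfrac{1}{r(N(\mu)-j)}\big)\big)$ and $i^r(\mu,x) = \max\{i \le N(\mu) : \alpha_i(\mu) \le \gamma_i^r(\mu,x)\}$ (with $\max\emptyset = 0$). Then for all $1 \le i < N(\mu)$: $\gamma_{i+1}^r(\mu,x) - \gamma_i^r(\mu,x) = \frac{r(N(\mu)-i) - r(N(\mu)-i+1)}{r(N(\mu)-i+1)}\big(\gamma_i^r(\mu,x) - \alpha_i(\mu)\big)$, and consequently $\gamma_{i^r(\mu,x)+1 \wedge 1}^r(\mu,x)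 = \max_{1\le i\le N(\mu)} \gamma_i^r(\mu,x)$ whenever $N(\mu)\ge 1$ (writing $\gamma^r(\mu,x) := \gamma^r_{(i^r(\mu,x)+1)\wedge 1}(\mu,x)$). -/
open MeasureTheory Filter Topology

/-- `γ_i^r(μ,x)` for a profile with `N` atoms `α 1 ≤ … ≤ α N` (1-based indexing):
`γ_i = r(N-i+1) (x - ∑_{j=1}^{i-1} α_j (1/r(N-j+1) - 1/r(N-j)))`. -/
noncomputable def gam (r : ℕ → ℝ) (N : ℕ) (α : ℕ → ℝ) (x : ℝ) (i : ℕ) : ℝ :=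
  r (N - i + 1) *
    (x - ∑ j ∈ Finset.Icc 1 (i - 1), α j * (1 / r (N - j + 1) - 1 / r (N - j)))

open Classical in
/-- `i^r(μ,x) = max {i ≤ N : α_i ≤ γ_i^r(μ,x)}`, with `max ∅ = 0`. -/
noncomputable def irdx (r : ℕ → ℝ) (N : ℕ) (α : ℕ → ℝ) (x : ℝ) : ℕ :=
  WithBot.unbotD 0 ((Finset.Icc 1 N).filter (fun i => α i ≤ gam r N α x i)).max

open Classical in
lemma le_irdx (r : ℕ → ℝ) (N : ℕ) (α : ℕ → ℝ) (x : ℝ) {i : ℕ}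
    (h : i ∈ (Finset.Icc 1 N).filter (fun i => α i ≤ gam r N α x i)) :
    i ≤ irdx r N α x := by
  have hle := Finset.le_max h
  unfold irdx
  rcases hmax : (((Finset.Icc 1 N).filter (fun i => α i ≤ gam r N α x i)).max) with _ | m
  · rw [hmax] at hle
    exact absurd hle (WithBot.not_coe_le_bot _)
  · rw [hmax] at hle
    exact WithBot.coe_le_coe.1 hle

open Classical in
lemma irdx_mem (r : ℕ → ℝ) (N : ℕ) (α : ℕ → ℝ) (x : ℝ)
    (h : irdx r N α x ≠ 0) :
    irdx r N α x ∈ (Finset.Icc 1 N).filter (fun i => α i ≤ gam r N α x i) := by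
  unfold irdx at h ⊢
  rcases hmax : (((Finset.Icc 1 N).filter (fun i => α i ≤ gam r N α x i)).max) with _ | m
  · rw [hmax] at h
    exact absurd rfl h
  · exact Finset.mem_of_max hmax

lemma chain_le (f : ℕ → ℝ) (a b : ℕ) (h : ∀ i, a ≤ i → i < b → f i ≤ f (i + 1)) :
    ∀ i j, a ≤ i → i ≤ j → j ≤ b → f i ≤ f j := by
  intro i j hai hij hjb
  induction j, hij using Nat.le_induction with
  | base => exact le_refl _
  | succ n hn ih =>
    exact le_trans (ih (by omega)) (h n (le_trans hai hn) (by omega))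

private lemma gam_succ_sub (r : ℕ → ℝ) (hr : ∀ n, 1 ≤ n → 0 < r n ∧ r n ≤ 1)
    (N : ℕ) (α : ℕ → ℝ) (x : ℝ) :
    ∀ i, 1 ≤ i → i < N →
      gam r N α x (i + 1) - gam r N α x i =
        (r (N - i) - r (N - i + 1)) / r (N - i + 1) * (gam r N α x i - α i) := by
  intro i h1 h2
  obtain ⟨m, rfl⟩ : ∃ m, i = m + 1 := ⟨i - 1, by omega⟩
  have ha : r (N - (m + 1)) ≠ 0 := ne_of_gt (hr _ (by omega)).1
  have hb : r (N - (m + 1) + 1) ≠ 0 := ne_of_gt (hr _ (by omega)).1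
  have e1 : N - (m + 1 + 1) + 1 = N - (m + 1) := by omega
  simp only [gam, Nat.add_sub_cancel, e1]
  rw [Finset.sum_Icc_succ_top (by omega : 1 ≤ m + 1)]
  field_simp
  ring

/-- The increment identity
`γ_{i+1} - γ_i = ((r(N-i) - r(N-i+1)) / r(N-i+1)) (γ_i - α_i)`, and the consequent fact
that `γ^r(μ,x) := γ_{(i^r(μ,x)+1) ∧ N}` is the maximum of `γ_1, …, γ_N`. -/
theorem stmt12 (r : ℕ → ℝ) (hr : ∀ n, 1 ≤ n → 0 < r n ∧ r n ≤ 1)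
    (hrmono : ∀ m n, 1 ≤ m → m ≤ n → r n ≤ r m)
    (N : ℕ) (α : ℕ → ℝ)
    (hα0 : ∀ i, 1 ≤ i → i ≤ N → 0 ≤ α i)
    (hαmono : ∀ i j, 1 ≤ i → i ≤ j → j ≤ N → α i ≤ α j)
    (x : ℝ) (hx : 0 ≤ x) :
    (∀ i, 1 ≤ i → i < N →
      gam r N α x (i + 1) - gam r N α x i =
        (r (N - i) - r (N - i + 1)) / r (N - i + 1) * (gam r N α x i - α i)) ∧
    (1 ≤ N →
      IsGreatest {y : ℝ | ∃ i, 1 ≤ i ∧ i ≤ N ∧ y = gam r N α x i}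
        (gam r N α x (min (irdx r N α x + 1) N))) := by
  have step := gam_succ_sub r hr N α x
  refine ⟨step, ?_⟩
  intro hN
  have hc : ∀ i, 1 ≤ i → i < N → 0 ≤ (r (N - i) - r (N - i + 1)) / r (N - i + 1) := by
    intro i h1 h2
    have := hrmono (N - i) (N - i + 1) (by omega) (by omega)
    exact div_nonneg (by linarith) (le_of_lt (hr _ (by omega)).1)
  -- propagation of failure
  have prop : ∀ i j, 1 ≤ i → i ≤ j → j ≤ N →
      gam r N α x i < α i → gam r N α x j < α j := by
    intro i j h1 hij hjN hlt
    induction j, hij using Nat.le_induction with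
    | base => exact hlt
    | succ n hn ih =>
      have hgn : gam r N α x n < α n := ih (by omega)
      have hcn := hc n (by omega) (by omega)
      have hstep := step n (by omega) (by omega)
      have hmul : (r (N - n) - r (N - n + 1)) / r (N - n + 1) *
          (gam r N α x n - α n) ≤ 0 :=
        mul_nonpos_of_nonneg_of_nonpos hcn (by linarith)
      have h1' : gam r N α x (n + 1) ≤ gam r N α x n := by linarith
      have h2' : α n ≤ α (n + 1) := hαmono n (n + 1) (by omega) (by omega) (by omega)
      linarith
  set I := irdx r N α x with hI
  have down : ∀ i, 1 ≤ i → i ≤ I → α i ≤ gam r N α x i := by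
    intro i h1 h2
    by_contra hlt
    push_neg at hlt
    have hIne : I ≠ 0 := by omega
    have hImem := irdx_mem r N α x hIne
    rw [Finset.mem_filter, Finset.mem_Icc] at hImem
    have := prop i I h1 h2 hImem.1.2 hlt
    linarith [hImem.2]
  have hnotin : ∀ i, 1 ≤ i → i ≤ N → I < i → gam r N α x i < α i := by
    intro i h1 h2 h3
    by_contra hge
    push_neg at hge
    have : i ≤ I := le_irdx r N α x
      (Finset.mem_filter.2 ⟨Finset.mem_Icc.2 ⟨h1, h2⟩, hge⟩)
    omega
  set k := min (I + 1) N with hk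
  have hk1 : 1 ≤ k := by omega
  have hkN : k ≤ N := min_le_right _ _
  have stepup : ∀ i, 1 ≤ i → i < k → gam r N α x i ≤ gam r N α x (i + 1) := by
    intro i h1 h2
    have hiI : i ≤ I := by omega
    have hiN : i < N := by omega
    have hai := down i h1 hiI
    have hstep := step i h1 hiN
    have := mul_nonneg (hc i h1 hiN) (by linarith : (0:ℝ) ≤ gam r N α x i - α i)
    linarith
  have stepdn : ∀ i, k ≤ i → i < N → gam r N α x (i + 1) ≤ gam r N α x i := by
    intro i h2 h3
    have h1 : 1 ≤ i := by omega
    have hiI : I < i := by omega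
    have hlt := hnotin i h1 (by omega) hiI
    have hstep := step i h1 h3
    have := mul_nonpos_of_nonneg_of_nonpos (hc i h1 h3)
      (by linarith : gam r N α x i - α i ≤ 0)
    linarith
  have up : ∀ i, 1 ≤ i → i ≤ k → gam r N α x i ≤ gam r N α x k := by
    intro i h1 h2
    exact chain_le (gam r N α x) 1 k stepup i k h1 h2 (le_refl _)
  have dn : ∀ i, k ≤ i → i ≤ N → gam r N α x i ≤ gam r N α x k := by
    intro i h1 h2
    have := chain_le (fun n => -gam r N α x n) k N
      (fun j hj1 hj2 => by simpa using stepdn j hj1 hj2) k i (le_refl _) h1 h2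
    simpa using this
  constructor
  · exact ⟨k, hk1, hkN, rfl⟩
  · rintro y ⟨i, h1, h2, rfl⟩
    rcases le_or_gt i k with h | h
    · exact up i h1 h
    · exact dn i (le_of_lt h) h2
end
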